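/- arXiv:2111.11577 — 4 statements merged into one kernel-verified Lean document; each statement's English description precedes it below -/
import Mathlib

section
/- For all n ≥ 1, log₂ s(n) ≥ (1/n)·C(n, ⌊n/2⌋), where s(n) is the number of sparse paving matroids on ground set Fin n and C(n,k) is the binomial coefficient. In particular, log₂ m(n) ≥ (1/n)·C(n, ⌊n/2⌋), where m(n) is the number of all matroids on Fin n. -/
open Matroid Set Filter

namespace Paper

variable {α β : Type*}

/-- Deletion of a set from a matroid. -/
def Delete (M : Matroid α) (D : Set α) : Matroid α := M ↾ (M.E \ D)

/-- Contraction of a set in a matroid, defined via duality. -/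
def Contract (M : Matroid α) (C : Set α) : Matroid α := (Delete M✶ C)✶

/-- `N` is a minor of `M` if it is obtained from `M` by a contraction followed by a deletion. -/
def IsMinor (N M : Matroid α) : Prop := ∃ C D : Set α, N = Delete (Contract M C) D

/-- `M` is isomorphic to `N`. -/
def Iso (M : Matroid α) (N : Matroid β) : Prop :=
  ∃ (f : α → β) (hf : Set.InjOn f M.E), M.map f hf = N

/-- `M` has a minor isomorphic to `N`. -/
def HasIsoMinor (M : Matroid α) (N : Matroid β) : Prop :=
  ∃ M' : Matroid α, IsMinor M' M ∧ Iso M' N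

/-- A circuit is a minimal dependent set. -/
def Circuit (M : Matroid α) (C : Set α) : Prop := M.Dep C ∧ ∀ D, D ⊂ C → M.Indep D

/-- A hyperplane is a maximal proper flat. -/
def Hyperplane (M : Matroid α) (H : Set α) : Prop :=
  M.IsFlat H ∧ H ≠ M.E ∧ ∀ F, M.IsFlat F → H ⊂ F → F = M.E

/-- A matroid is sparse paving if every nonspanning circuit is a hyperplane. -/
def SparsePaving (M : Matroid α) : Prop :=
  ∀ C, Circuit M C → ¬ M.Spanning C → Hyperplane M C

/-- `M` has rank `r`: some base has exactly `r` elements. -/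
def RankEq (M : Matroid α) (r : ℕ) : Prop := ∃ B, M.IsBase B ∧ B.ncard = r

/-- `N` is (isomorphic to) the rank-3 whirl `𝒲³`: the rank-3 sparse paving matroid on six
elements whose 3-element circuits are exactly the three listed triples. -/
def IsWhirl3 (N : Matroid α) : Prop :=
  ∃ a : Fin 6 → α, Function.Injective a ∧ N.E = Set.range a ∧
    RankEq N 3 ∧ SparsePaving N ∧
    ∀ C : Set α, (Circuit N C ∧ C.ncard = 3) ↔
      (C = {a 0, a 1, a 2} ∨ C = {a 2, a 3, a 4} ∨ C = {a 4, a 5, a 0})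

/-- `N` is (isomorphic to) `M(K₄)`: the rank-3 sparse paving matroid on six elements whose
3-element circuits are exactly the four listed triples. -/
def IsMK4 (N : Matroid α) : Prop :=
  ∃ a : Fin 6 → α, Function.Injective a ∧ N.E = Set.range a ∧
    RankEq N 3 ∧ SparsePaving N ∧
    ∀ C : Set α, (Circuit N C ∧ C.ncard = 3) ↔
      (C = {a 0, a 1, a 2} ∨ C = {a 2, a 3, a 4} ∨ C = {a 4, a 5, a 0} ∨ C = {a 1, a 3, a 5})

/-- `M` has no minor isomorphic to `𝒲³` and no minor isomorphic to `M(K₄)`. -/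
def WFree (M : Matroid α) : Prop :=
  (¬ ∃ N : Matroid α, IsMinor N M ∧ IsWhirl3 N) ∧
  (¬ ∃ N : Matroid α, IsMinor N M ∧ IsMK4 N)

end Paper

namespace Paper


section Aux

variable {n : ℕ}

/-- A family of `k`-sets that is a stable set in the Johnson graph. -/
def Stable (k : ℕ) (𝒜 : Set (Set (Fin n))) : Prop :=
  (∀ X ∈ 𝒜, X.ncard = k) ∧
  ∀ (I : Set (Fin n)) (x y : Fin n), x ∉ I → y ∉ I → x ≠ y →
    insert x I ∈ 𝒜 → insert y I ∈ 𝒜 → False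

lemma Stable.mono {k : ℕ} {𝒜 ℬ : Set (Set (Fin n))} (h : Stable k ℬ) (hs : 𝒜 ⊆ ℬ) :
    Stable k 𝒜 :=
  ⟨fun X hX => h.1 X (hs hX),
   fun I x y hx hy hxy h1 h2 => h.2 I x y hx hy hxy (hs h1) (hs h2)⟩

variable {k : ℕ} {𝒜 : Set (Set (Fin n))}

lemma fam_subset (hst : Stable k 𝒜) :
    ∀ ⦃I J : Set (Fin n)⦄, (J.ncard ≤ k ∧ J ∉ 𝒜) → I ⊆ J → (I.ncard ≤ k ∧ I ∉ 𝒜) := by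
  intro I J hJ hIJ
  have hcard : I.ncard ≤ J.ncard := Set.ncard_le_ncard hIJ (Set.toFinite J)
  refine ⟨hcard.trans hJ.1, fun hI𝒜 => ?_⟩
  have hIk : I.ncard = k := hst.1 I hI𝒜
  have : J.ncard ≤ I.ncard := by omega
  have := Set.eq_of_subset_of_ncard_le hIJ this (Set.toFinite J)
  exact hJ.2 (this ▸ hI𝒜)

lemma fam_aug (hst : Stable k 𝒜) :
    ∀ ⦃I J : Set (Fin n)⦄, (I.ncard ≤ k ∧ I ∉ 𝒜) → (J.ncard ≤ k ∧ J ∉ 𝒜) →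
      I.ncard < J.ncard → ∃ e ∈ J, e ∉ I ∧ ((insert e I).ncard ≤ k ∧ insert e I ∉ 𝒜) := by
  intro I J hI hJ hlt
  by_cases hgood : ∃ e ∈ J, e ∉ I ∧ insert e I ∉ 𝒜
  · obtain ⟨e, heJ, heI, h𝒜⟩ := hgood
    refine ⟨e, heJ, heI, ?_, h𝒜⟩
    rw [Set.ncard_insert_of_notMem heI]
    omega
  push_neg at hgood
  -- every augmentation lands in 𝒜
  have hJI : (J \ I).Nonempty := by
    rw [Set.diff_nonempty]
    intro hsub
    exact absurd (Set.ncard_le_ncard hsub (Set.toFinite I)) (by omega)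
  obtain ⟨e, heJ, heI⟩ := hJI
  have he𝒜 : insert e I ∈ 𝒜 := hgood e heJ heI
  by_cases hsing : ∃ f ∈ J, f ∉ I ∧ f ≠ e
  · obtain ⟨f, hfJ, hfI, hfe⟩ := hsing
    exact absurd (hst.2 I f e hfI heI hfe (hgood f hfJ hfI) he𝒜) (fun h => h)
  · push_neg at hsing
    have hJsub : J ⊆ insert e I := by
      intro x hxJ
      by_cases hxI : x ∈ I
      · exact Set.mem_insert_of_mem _ hxI
      · exact (hsing x hxJ hxI) ▸ Set.mem_insert _ _
    have h1 : J.ncard ≤ (insert e I).ncard := Set.ncard_le_ncard hJsub (Set.toFinite _)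
    have h2 : (insert e I).ncard = I.ncard + 1 := Set.ncard_insert_of_notMem heI
    have : J = insert e I := Set.eq_of_subset_of_ncard_le hJsub (by omega) (Set.toFinite _)
    exact absurd (this ▸ he𝒜) hJ.2

/-- The matroid on `Fin n` whose independent sets are the sets of size at most `k`
that are not in `𝒜`. -/
def famMatroid (k : ℕ) (𝒜 : Set (Set (Fin n))) (hst : Stable k 𝒜) (hk : 1 ≤ k) :
    Matroid (Fin n) :=
  (IndepMatroid.ofFinite (Set.finite_univ)
    (fun I => I.ncard ≤ k ∧ I ∉ 𝒜)
    (by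
      refine ⟨by simp, fun h => ?_⟩
      have := hst.1 ∅ h
      simp at this
      omega)
    (fam_subset hst)
    (fam_aug hst)
    (fun I _ => Set.subset_univ I)).matroid

@[simp] lemma famMatroid_indep (hst : Stable k 𝒜) (hk : 1 ≤ k) {I : Set (Fin n)} :
    (famMatroid k 𝒜 hst hk).Indep I ↔ I.ncard ≤ k ∧ I ∉ 𝒜 := Iff.rfl

@[simp] lemma famMatroid_ground (hst : Stable k 𝒜) (hk : 1 ≤ k) :
    (famMatroid k 𝒜 hst hk).E = Set.univ := rfl


variable {k : ℕ} {𝒜 : Set (Set (Fin n))}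

lemma exists_two_not_mem {B : Set (Fin n)} (h : B.ncard + 2 ≤ n) :
    ∃ e f : Fin n, e ∉ B ∧ f ∉ B ∧ e ≠ f := by
  have hcompl : B.ncard + Bᶜ.ncard = n := by
    rw [Set.ncard_add_ncard_compl]; simp [Set.ncard_univ]
  have h2 : 1 < Bᶜ.ncard := by omega
  obtain ⟨e, f, he, hf, hef⟩ := (Set.one_lt_ncard_iff (Set.toFinite _)).mp h2
  exact ⟨e, f, he, hf, hef⟩

lemma exists_not_mem {B : Set (Fin n)} (h : B.ncard < n) : ∃ e : Fin n, e ∉ B := by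
  have hcompl : B.ncard + Bᶜ.ncard = n := by
    rw [Set.ncard_add_ncard_compl]; simp [Set.ncard_univ]
  have : Bᶜ.Nonempty := by
    rw [Set.nonempty_iff_ne_empty]
    intro hc; rw [hc] at hcompl; simp at hcompl; omega
  exact this

lemma famMatroid_base (hst : Stable k 𝒜) (hk : 1 ≤ k) (hkn : k < n) {B : Set (Fin n)} :
    (famMatroid k 𝒜 hst hk).IsBase B ↔ B.ncard = k ∧ B ∉ 𝒜 := by
  rw [Matroid.isBase_iff_maximal_indep]
  constructor
  · rintro ⟨⟨hBk, hB𝒜⟩, hmax⟩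
    refine ⟨?_, hB𝒜⟩
    by_contra hne
    have hlt : B.ncard < k := lt_of_le_of_ne hBk hne
    -- find e ∉ B with insert e B independent
    have : ∃ e, e ∉ B ∧ (insert e B).ncard ≤ k ∧ insert e B ∉ 𝒜 := by
      by_cases hcase : B.ncard + 1 < k
      · obtain ⟨e, he⟩ := exists_not_mem (by omega : B.ncard < n)
        refine ⟨e, he, ?_, fun h𝒜 => ?_⟩
        · rw [Set.ncard_insert_of_notMem he]; omega
        · have := hst.1 _ h𝒜
          rw [Set.ncard_insert_of_notMem he] at this; omega
      · have hBk1 : B.ncard + 1 = k := by omega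
        obtain ⟨e, f, he, hf, hef⟩ := exists_two_not_mem (by omega : B.ncard + 2 ≤ n)
        by_cases he𝒜 : insert e B ∈ 𝒜
        · refine ⟨f, hf, ?_, fun hf𝒜 => hst.2 B e f he hf hef he𝒜 hf𝒜⟩
          rw [Set.ncard_insert_of_notMem hf]; omega
        · refine ⟨e, he, ?_, he𝒜⟩
          rw [Set.ncard_insert_of_notMem he]; omega
    obtain ⟨e, heB, h1, h2⟩ := this
    have hind : (famMatroid k 𝒜 hst hk).Indep (insert e B) := ⟨h1, h2⟩
    have := hmax hind (Set.subset_insert e B)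
    exact heB (this (Set.mem_insert e B))
  · rintro ⟨hBk, hB𝒜⟩
    refine ⟨⟨le_of_eq hBk, hB𝒜⟩, fun X hX hBX => ?_⟩
    obtain ⟨hXk, -⟩ := hX
    have : X = B := (Set.eq_of_subset_of_ncard_le hBX (by omega) (Set.toFinite X)).symm
    exact this.le

lemma famMatroid_dep_iff (hst : Stable k 𝒜) (hk : 1 ≤ k) {X : Set (Fin n)} :
    (famMatroid k 𝒜 hst hk).Dep X ↔ ¬(X.ncard ≤ k ∧ X ∉ 𝒜) := by
  rw [Matroid.dep_iff]
  simp [famMatroid_indep, famMatroid_ground]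


lemma famMatroid_sparsePaving (hst : Stable k 𝒜) (hk : 1 ≤ k) (hkn : k < n) :
    SparsePaving (famMatroid k 𝒜 hst hk) := by
  intro C hC hnspan
  obtain ⟨hdep, hmin⟩ := hC
  set M := famMatroid k 𝒜 hst hk with hM
  have hdep' : ¬(C.ncard ≤ k ∧ C ∉ 𝒜) := (famMatroid_dep_iff hst hk).mp hdep
  by_cases hCk : C.ncard ≤ k
  · have hC𝒜 : C ∈ 𝒜 := by tauto
    have hCcard : C.ncard = k := hst.1 C hC𝒜
    refine ⟨⟨?_, ?_⟩, ?_, ?_⟩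
    · -- Flat : subset_of_basis_of_basis
      intro I X hIC hIX
      obtain ⟨hIk, hI𝒜⟩ := hIC.indep
      have hIsub : I ⊆ C := hIC.subset
      have hInec : I ≠ C := fun h => hdep.not_indep (h ▸ hIC.indep)
      have hIlt : I.ncard < k := by
        rw [← hCcard]
        exact Set.ncard_lt_ncard (ssubset_of_subset_of_ne hIsub hInec) (Set.toFinite C)
      obtain ⟨c, hcC, hcI⟩ := exists_of_ssubset (ssubset_of_subset_of_ne hIsub hInec)
      have hcdep : M.Dep (insert c I) := hIC.insert_dep ⟨hcC, hcI⟩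
      have hccard : (insert c I).ncard = I.ncard + 1 := Set.ncard_insert_of_notMem hcI
      have hc𝒜 : insert c I ∈ 𝒜 := by
        have := (famMatroid_dep_iff hst hk).mp hcdep
        by_contra h; exact this ⟨by omega, h⟩
      intro x hxX
      by_cases hxI : x ∈ I
      · exact hIsub hxI
      by_cases hxc : x = c
      · exact hxc ▸ hcC
      have hxdep : M.Dep (insert x I) := hIX.insert_dep ⟨hxX, hxI⟩
      have hxcard : (insert x I).ncard = I.ncard + 1 := Set.ncard_insert_of_notMem hxI
      have hx𝒜 : insert x I ∈ 𝒜 := by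
        have := (famMatroid_dep_iff hst hk).mp hxdep
        by_contra h; exact this ⟨by omega, h⟩
      exact (hst.2 I x c hxI hcI hxc hx𝒜 hc𝒜).elim
    · exact Set.subset_univ C
    · -- C ≠ M.E
      intro hCE
      have : C.ncard = n := by
        rw [hCE, famMatroid_ground, Set.ncard_univ, Nat.card_eq_fintype_card, Fintype.card_fin]
      omega
    · -- maximality
      intro F hF hCF
      obtain ⟨e, heF, heC⟩ := exists_of_ssubset hCF
      have hCne : C.Nonempty := Set.nonempty_of_ncard_ne_zero (by omega)
      obtain ⟨c, hcC⟩ := hCne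
      have hcd : c ∉ C \ {c} := by simp
      have hed : e ∉ C \ {c} := fun h => heC h.1
      have hec : e ≠ c := fun h => heC (h ▸ hcC)
      have hCid : insert c (C \ {c}) = C := by
        rw [Set.insert_diff_singleton, Set.insert_eq_self.mpr hcC]
      have hB𝒜 : insert e (C \ {c}) ∉ 𝒜 :=
        fun h => hst.2 (C \ {c}) e c hed hcd hec h (by rw [hCid]; exact hC𝒜)
      have hBcard : (insert e (C \ {c})).ncard = k := by
        rw [Set.ncard_insert_of_notMem hed, Set.ncard_diff_singleton_of_mem hcC]
        omega
      have hBbase : M.IsBase (insert e (C \ {c})) :=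
        (famMatroid_base hst hk hkn).mpr ⟨hBcard, hB𝒜⟩
      have hBF : insert e (C \ {c}) ⊆ F :=
        Set.insert_subset heF (Set.diff_subset.trans hCF.subset)
      have hBbasisF : M.IsBasis (insert e (C \ {c})) F :=
        hBbase.indep.isBasis_of_maximal_subset hBF
          (fun J hJ hBJ _ => (hBbase.eq_of_subset_indep hJ hBJ).ge) hF.subset_ground
      have hEF : M.E ⊆ F := hF.subset_of_isBasis_of_isBasis hBbasisF hBbase.isBasis_ground
      exact subset_antisymm hF.subset_ground hEF
  · -- C.ncard > k : C is spanning, contradiction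
    push_neg at hCk
    exfalso
    have hCk1 : C.ncard = k + 1 := by
      by_contra h
      obtain ⟨D, hDC, hDcard⟩ := Set.exists_subset_card_eq (show k + 1 ≤ C.ncard by omega)
      have hDss : D ⊂ C := ssubset_of_subset_of_ne hDC (fun hh => by rw [hh] at hDcard; omega)
      exact absurd (hmin D hDss).1 (by omega)
    obtain ⟨c1, c2, hc1, hc2, hne⟩ :=
      (Set.one_lt_ncard_iff (Set.toFinite C)).mp (show 1 < C.ncard by omega)
    have hid : ∀ a b : Fin n, a ∈ C → b ∈ C → a ≠ b →
        insert b (C \ {a, b}) = C \ {a} := by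
      intro a b haC hbC hab
      ext x
      simp only [Set.mem_insert_iff, Set.mem_diff, Set.mem_singleton_iff]
      constructor
      · rintro (rfl | ⟨hxC, hx⟩)
        · exact ⟨hbC, fun h => hab h.symm⟩
        · exact ⟨hxC, fun h => hx (Or.inl h)⟩
      · rintro ⟨hxC, hxa⟩
        by_cases hxb : x = b
        · exact Or.inl hxb
        · exact Or.inr ⟨hxC, fun h => h.elim hxa hxb⟩
    have key : C \ {c1} ∉ 𝒜 ∨ C \ {c2} ∉ 𝒜 := by
      by_contra h
      push_neg at h
      have h12 : c2 ∉ C \ {c1, c2} := by simp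
      have h21 : c1 ∉ C \ {c1, c2} := by simp
      have e1 : insert c2 (C \ {c1, c2}) = C \ {c1} := hid c1 c2 hc1 hc2 hne
      have e2 : insert c1 (C \ {c1, c2}) = C \ {c2} := by
        have := hid c2 c1 hc2 hc1 hne.symm
        rwa [Set.pair_comm c2 c1] at this
      exact hst.2 (C \ {c1, c2}) c2 c1 h12 h21 hne.symm (e1 ▸ h.1) (e2 ▸ h.2)
    have hbase : ∃ B, M.IsBase B ∧ B ⊆ C := by
      rcases key with hgood | hgood
      · exact ⟨C \ {c1}, (famMatroid_base hst hk hkn).mpr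
          ⟨by rw [Set.ncard_diff_singleton_of_mem hc1]; omega, hgood⟩, Set.diff_subset⟩
      · exact ⟨C \ {c2}, (famMatroid_base hst hk hkn).mpr
          ⟨by rw [Set.ncard_diff_singleton_of_mem hc2]; omega, hgood⟩, Set.diff_subset⟩
    obtain ⟨B, hB, hBC⟩ := hbase
    exact hnspan (hB.spanning.superset hBC (Set.subset_univ C))

end Aux

section Counting

variable {n : ℕ}

noncomputable instance matroidFinite : Finite (Matroid (Fin n)) := by
  apply Finite.of_injective (fun M : Matroid (Fin n) => (M.E, M.Indep))
  intro M1 M2 h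
  simp only [Prod.mk.injEq] at h
  exact Matroid.ext_indep h.1 (fun I _ => by rw [h.2])

variable {k : ℕ}

lemma famMatroid_inj {𝒜 ℬ : Set (Set (Fin n))} (hstA : Stable k 𝒜) (hstB : Stable k ℬ)
    (hk : 1 ≤ k) (h : famMatroid k 𝒜 hstA hk = famMatroid k ℬ hstB hk) : 𝒜 = ℬ := by
  ext X
  constructor <;> intro hX
  · have hXk : X.ncard = k := hstA.1 X hX
    have hnd : ¬ (famMatroid k 𝒜 hstA hk).Indep X := fun h' => h'.2 hX
    rw [h, famMatroid_indep] at hnd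
    by_contra hB
    exact hnd ⟨le_of_eq hXk, hB⟩
  · have hXk : X.ncard = k := hstB.1 X hX
    have hnd : ¬ (famMatroid k ℬ hstB hk).Indep X := fun h' => h'.2 hX
    rw [← h, famMatroid_indep] at hnd
    by_contra hB
    exact hnd ⟨le_of_eq hXk, hB⟩

/-- Sum of the elements of a finset of `Fin n`, as an element of `ZMod n`. -/
def sumFin (F : Finset (Fin n)) : ZMod n := ∑ i ∈ F, ((i : ℕ) : ZMod n)

/-- The Graham–Sloane class of `k`-subsets with element-sum `t` mod `n`. -/
def classSet (k : ℕ) (t : ZMod n) : Finset (Finset (Fin n)) :=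
  (Finset.powersetCard k (Finset.univ : Finset (Fin n))).filter (fun F => sumFin F = t)

lemma classSet_card {t : ZMod n} {F : Finset (Fin n)} (hF : F ∈ classSet k t) :
    F.card = k := by
  have := (Finset.mem_filter.mp hF).1
  exact (Finset.mem_powersetCard.mp this).2

lemma classSet_sum {t : ZMod n} {F : Finset (Fin n)} (hF : F ∈ classSet k t) :
    sumFin F = t := (Finset.mem_filter.mp hF).2

lemma stable_of_subset_class (t : ZMod n) (A : Finset (Finset (Fin n)))
    (hA : A ⊆ classSet k t) :
    Stable k ((fun F : Finset (Fin n) => (F : Set (Fin n))) '' ↑A) := by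
  constructor
  · rintro X ⟨F, hF, rfl⟩
    rw [Set.ncard_coe_finset]
    exact classSet_card (hA hF)
  · rintro I x y hx hy hxy ⟨F, hF, hFeq⟩ ⟨F', hF', hFeq'⟩
    replace hFeq : (F : Set (Fin n)) = insert x I := hFeq
    replace hFeq' : (F' : Set (Fin n)) = insert y I := hFeq'
    have hI : I = ↑(F.erase x) := by
      rw [Finset.coe_erase, hFeq, Set.insert_diff_self_of_notMem hx]
    have hFdecomp : F = insert x (F.erase x) := by
      apply Finset.coe_injective
      rw [Finset.coe_insert, ← hI, hFeq]
    have hF'decomp : F' = insert y (F.erase x) := by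
      apply Finset.coe_injective
      rw [Finset.coe_insert, ← hI, hFeq']
    have hyF : y ∉ F.erase x := by
      rw [← Finset.mem_coe, ← hI]; exact hy
    have hs1 : sumFin F = ((x : ℕ) : ZMod n) + sumFin (F.erase x) := by
      conv_lhs => rw [hFdecomp]
      exact Finset.sum_insert (Finset.notMem_erase x F)
    have hs2 : sumFin F' = ((y : ℕ) : ZMod n) + sumFin (F.erase x) := by
      conv_lhs => rw [hF'decomp]
      exact Finset.sum_insert hyF
    have hsum : ((x : ℕ) : ZMod n) = ((y : ℕ) : ZMod n) := by
      have h1 := classSet_sum (hA hF)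
      have h2 := classSet_sum (hA hF')
      have : ((x : ℕ) : ZMod n) + sumFin (F.erase x)
          = ((y : ℕ) : ZMod n) + sumFin (F.erase x) := by
        rw [← hs1, ← hs2, h1, h2]
      exact add_right_cancel this
    haveI : NeZero n := ⟨by have hlt := x.isLt; omega⟩
    have : (x : ℕ) = (y : ℕ) := by
      have := congrArg ZMod.val hsum
      rwa [ZMod.val_cast_of_lt x.isLt, ZMod.val_cast_of_lt y.isLt] at this
    exact hxy (Fin.ext this)

lemma exists_big_class (hn : 1 ≤ n) (k : ℕ) :
    ∃ t : ZMod n, n.choose k ≤ n * (classSet (n := n) k t).card := by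
  haveI : NeZero n := ⟨by omega⟩
  have hcard : (Finset.powersetCard k (Finset.univ : Finset (Fin n))).card = n.choose k := by
    rw [Finset.card_powersetCard, Finset.card_univ, Fintype.card_fin]
  have hsplit : (Finset.powersetCard k (Finset.univ : Finset (Fin n))).card
      = ∑ t : ZMod n, (classSet k t).card :=
    Finset.card_eq_sum_card_fiberwise (fun F _ => Finset.mem_univ (sumFin F))
  obtain ⟨t, -, hmax⟩ := Finset.exists_max_image Finset.univ
    (fun t : ZMod n => (classSet (n := n) k t).card) Finset.univ_nonempty
  refine ⟨t, ?_⟩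
  calc n.choose k = ∑ t : ZMod n, (classSet (n := n) k t).card := by rw [← hsplit, hcard]
    _ ≤ (Finset.univ : Finset (ZMod n)).card • (classSet (n := n) k t).card :=
        Finset.sum_le_card_nsmul _ _ _ (fun x _ => hmax x (Finset.mem_univ x))
    _ = n * (classSet (n := n) k t).card := by
        rw [smul_eq_mul, Finset.card_univ, ZMod.card]

end Counting


lemma count_lower (n : ℕ) (hn : 1 ≤ n) :
    ∃ m : ℕ, n.choose (n / 2) ≤ n * m ∧
      2 ^ m ≤ ({M : Matroid (Fin n) | M.E = Set.univ ∧ SparsePaving M}).ncard := by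
  rcases eq_or_lt_of_le hn with h1 | h2
  · -- n = 1
    subst h1
    refine ⟨1, by norm_num, ?_⟩
    have hfree : (Matroid.freeOn (Set.univ : Set (Fin 1)))
        ∈ {M : Matroid (Fin 1) | M.E = Set.univ ∧ SparsePaving M} := by
      refine ⟨rfl, fun C hC _ => ?_⟩
      exact absurd (Matroid.freeOn_indep_iff.mpr hC.1.subset_ground) hC.1.not_indep
    have hloopy : (Matroid.loopyOn (Set.univ : Set (Fin 1)))
        ∈ {M : Matroid (Fin 1) | M.E = Set.univ ∧ SparsePaving M} := by
      refine ⟨rfl, fun C hC hns => ?_⟩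
      exact absurd ((Matroid.loopyOn_isBase_iff.mpr rfl).spanning.superset
        (Set.empty_subset C) hC.1.subset_ground) hns
    have hne : Matroid.freeOn (Set.univ : Set (Fin 1)) ≠ Matroid.loopyOn Set.univ := by
      intro h
      have h1 : (Matroid.freeOn (Set.univ : Set (Fin 1))).Indep Set.univ :=
        Matroid.freeOn_indep_iff.mpr subset_rfl
      rw [h, Matroid.loopyOn_indep_iff] at h1
      exact Set.univ_nonempty.ne_empty h1
    calc (2:ℕ) ^ 1
        = ({Matroid.freeOn Set.univ, Matroid.loopyOn Set.univ} : Set (Matroid (Fin 1))).ncard := by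
          rw [Set.ncard_pair hne]; norm_num
      _ ≤ _ := Set.ncard_le_ncard
          (by rw [Set.insert_subset_iff]; exact ⟨hfree, Set.singleton_subset_iff.mpr hloopy⟩)
          (Set.toFinite _)
  · -- 2 ≤ n
    have hk : 1 ≤ n / 2 := by omega
    have hkn : n / 2 < n := by omega
    obtain ⟨t, ht⟩ := exists_big_class hn (n / 2)
    refine ⟨(classSet (n / 2) t).card, ht, ?_⟩
    set 𝒮 := {M : Matroid (Fin n) | M.E = Set.univ ∧ SparsePaving M} with h𝒮
    let Φ : {A : Finset (Finset (Fin n)) // A ∈ (classSet (n := n) (n / 2) t).powerset} →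
        {M : Matroid (Fin n) // M ∈ 𝒮} := fun A =>
      ⟨famMatroid (n / 2) ((fun F : Finset (Fin n) => (F : Set (Fin n))) '' ↑A.1)
          (stable_of_subset_class t A.1 (Finset.mem_powerset.mp A.2)) hk,
        famMatroid_ground _ _,
        famMatroid_sparsePaving (stable_of_subset_class t A.1 (Finset.mem_powerset.mp A.2))
          hk hkn⟩
    have hΦ : Function.Injective Φ := by
      intro A B hAB
      have hval := congrArg Subtype.val hAB
      have h2 := famMatroid_inj (stable_of_subset_class t A.1 (Finset.mem_powerset.mp A.2))
        (stable_of_subset_class t B.1 (Finset.mem_powerset.mp B.2)) hk hval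
      apply Subtype.ext
      apply Finset.coe_injective
      exact Set.image_injective.mpr Finset.coe_injective h2
    calc (2:ℕ) ^ (classSet (n := n) (n / 2) t).card
        = (classSet (n := n) (n / 2) t).powerset.card := (Finset.card_powerset _).symm
      _ = Nat.card {A // A ∈ (classSet (n := n) (n / 2) t).powerset} :=
          (Nat.card_eq_finsetCard _).symm
      _ ≤ Nat.card {M // M ∈ 𝒮} := Nat.card_le_card_of_injective Φ hΦ
      _ = 𝒮.ncard := Nat.card_coe_set_eq 𝒮

lemma keylog {n m C s : ℕ} (hn : 1 ≤ n) (h2 : 2 ^ m ≤ s) (hC : C ≤ n * m) :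
    ((1:ℝ)/n) * C ≤ Real.logb 2 s := by
  have hs0 : (0:ℝ) < s := by
    have : 0 < s := lt_of_lt_of_le (Nat.two_pow_pos m) h2
    exact_mod_cast this
  have hn0 : (0:ℝ) < n := by exact_mod_cast hn
  have step1 : ((1:ℝ)/n) * C ≤ m := by
    rw [div_mul_eq_mul_div, one_mul, div_le_iff₀ hn0]
    calc (C:ℝ) ≤ ((n*m : ℕ) : ℝ) := by exact_mod_cast hC
      _ = m * n := by push_cast; ring
  have step2 : (m:ℝ) = Real.logb 2 ((2:ℝ)^m) := by
    rw [Real.logb_pow, Real.logb_self_eq_one one_lt_two, mul_one]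
  have step3 : Real.logb 2 ((2:ℝ)^m) ≤ Real.logb 2 s := by
    apply Real.logb_le_logb_of_le one_lt_two (by positivity)
    exact_mod_cast h2
  linarith


/-- **Lemma (Graham–Sloane lower bound).** For all `n ≥ 1`,
`log₂ s(n) ≥ (1/n)·C(n,⌊n/2⌋)` and `log₂ m(n) ≥ (1/n)·C(n,⌊n/2⌋)`. -/
theorem graham_sloane_lower_bound (n : ℕ) (hn : 1 ≤ n) :
    ((1 : ℝ) / n) * (n.choose (n / 2)) ≤
      Real.logb 2 (Set.ncard {M : Matroid (Fin n) | M.E = Set.univ ∧ SparsePaving M}) ∧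
    ((1 : ℝ) / n) * (n.choose (n / 2)) ≤
      Real.logb 2 (Set.ncard {M : Matroid (Fin n) | M.E = Set.univ}) := by
  obtain ⟨m, hC, h2⟩ := count_lower n hn
  constructor
  · exact keylog hn h2 hC
  · have hsub : {M : Matroid (Fin n) | M.E = Set.univ ∧ SparsePaving M}
        ⊆ {M : Matroid (Fin n) | M.E = Set.univ} := fun M hM => hM.1
    have hle := Set.ncard_le_ncard hsub (Set.toFinite _)
    exact keylog hn (h2.trans hle) hC


end Paper
end

section
/- Let n ≥ 4 and let M be a rank-3 sparse paving matroid on Fin n with family C of circuit-hyperplanes. Then M has no minor isomorphic to 𝒲³ and no minor isomorphic to M(K₄) if and only if every 6-element subset of Fin n contains at most 2 members of C. -/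
open Matroid Set Filter

namespace Paper

/-! ### Auxiliary lemmas -/

lemma flat_closure (M : Matroid α) (X : Set α) : M.IsFlat (M.closure X) := by
  rw [Matroid.closure_def]
  have hne : {F | M.IsFlat F ∧ X ∩ M.E ⊆ F}.Nonempty := ⟨M.E, M.ground_isFlat, inter_subset_right⟩
  haveI := hne.to_subtype
  rw [sInter_eq_iInter]
  exact Matroid.IsFlat.iInter (fun F => F.2.1)

lemma hyperplane_closure_insert {M : Matroid α} {C : Set α} {x : α}
    (hH : Hyperplane M C) (hx : x ∈ M.E) (hxC : x ∉ C) :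
    M.closure (insert x C) = M.E := by
  have hCE : C ⊆ M.E := hH.1.subset_ground
  have hsub : insert x C ⊆ M.E := insert_subset hx hCE
  refine hH.2.2 _ (flat_closure M _) ?_
  have h1 : C ⊆ M.closure (insert x C) :=
    (subset_insert x C).trans (M.subset_closure _ hsub)
  refine ssubset_iff_subset_ne.mpr ⟨h1, fun hcon => hxC ?_⟩
  exact hcon ▸ M.subset_closure _ hsub (mem_insert x C)

lemma restrict_closure (M : Matroid α) {R X : Set α} (hR : R ⊆ M.E) (hX : X ⊆ R) :
    (M ↾ R).closure X = M.closure X ∩ R := by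
  obtain ⟨I, hI⟩ := (M ↾ R).exists_isBasis X (by simpa using hX)
  have hIX : M.IsBasis I X := ((isBasis_restrict_iff hR).mp hI).1
  have hIR : I ⊆ R := hI.subset.trans hX
  rw [← hI.closure_eq_closure, ← hIX.closure_eq_closure]
  ext e
  rw [mem_inter_iff, hI.indep.mem_closure_iff', hIX.indep.mem_closure_iff',
    Matroid.restrict_ground_eq, Matroid.restrict_indep_iff]
  constructor
  · rintro ⟨heR, h⟩
    exact ⟨⟨hR heR, fun hi => h ⟨hi, insert_subset heR hIR⟩⟩, heR⟩
  · rintro ⟨⟨heE, h⟩, heR⟩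
    exact ⟨heR, fun hi => h hi.1⟩

lemma restrict_circuit_iff (M : Matroid α) {R c : Set α} (hR : R ⊆ M.E) :
    Circuit (M ↾ R) c ↔ Circuit M c ∧ c ⊆ R := by
  constructor
  · rintro ⟨hdep, hmin⟩
    rw [Matroid.restrict_dep_iff] at hdep
    refine ⟨⟨dep_of_not_indep hdep.1 (hdep.2.trans hR), fun D hD => ?_⟩, hdep.2⟩
    exact ((Matroid.restrict_indep_iff).mp (hmin D hD)).1
  · rintro ⟨⟨hdep, hmin⟩, hcR⟩
    refine ⟨Matroid.restrict_dep_iff.mpr ⟨hdep.not_indep, hcR⟩, fun D hD => ?_⟩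
    exact (hmin D hD).indep_restrict_of_subset (hD.subset.trans hcR)

lemma exists_circuit_subset {n : ℕ} {M : Matroid (Fin n)} {D : Set (Fin n)} (hD : M.Dep D) :
    ∃ C, C ⊆ D ∧ Circuit M C := by
  obtain ⟨k, hk⟩ : ∃ k, D.ncard = k := ⟨_, rfl⟩
  induction k using Nat.strong_induction_on generalizing D with
  | _ k ih =>
    by_cases h : ∀ D', D' ⊂ D → M.Indep D'
    · exact ⟨D, Subset.rfl, hD, h⟩
    · push_neg at h
      obtain ⟨D', hD'D, hD'⟩ := h
      have hdep : M.Dep D' := dep_of_not_indep hD' (hD'D.subset.trans hD.subset_ground)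
      obtain ⟨C, hCD', hC⟩ := ih D'.ncard (hk ▸ Set.ncard_lt_ncard hD'D (Set.toFinite D))
        hdep rfl
      exact ⟨C, hCD'.trans hD'D.subset, hC⟩

section Rank3

variable {n : ℕ} {M : Matroid (Fin n)}

lemma base_ncard (hrk : RankEq M 3) {B : Set (Fin n)} (hB : M.IsBase B) : B.ncard = 3 := by
  obtain ⟨B₀, hB₀, hB₀3⟩ := hrk
  rw [hB.ncard_eq_ncard_of_isBase hB₀, hB₀3]

lemma indep_ncard_le (hrk : RankEq M 3) {I : Set (Fin n)} (hI : M.Indep I) : I.ncard ≤ 3 := by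
  obtain ⟨B, hB, hIB⟩ := hI.exists_isBase_superset
  exact le_trans (Set.ncard_le_ncard hIB (Set.toFinite B)) (le_of_eq (base_ncard hrk hB))

lemma indep_base3 (hrk : RankEq M 3) {I : Set (Fin n)} (hI : M.Indep I) (h3 : I.ncard = 3) :
    M.IsBase I := by
  obtain ⟨B, hB, hIB⟩ := hI.exists_isBase_superset
  rwa [Set.eq_of_subset_of_ncard_le hIB (le_of_eq ((base_ncard hrk hB).trans h3.symm))]

lemma spanning_indep_of_small (hrk : RankEq M 3) {X : Set (Fin n)} (hX : M.Spanning X)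
    (h3 : X.ncard ≤ 3) : M.Indep X := by
  obtain ⟨B, hB, hBX⟩ := hX.exists_isBase_subset
  have : B = X := Set.eq_of_subset_of_ncard_le hBX (le_trans h3 (le_of_eq (base_ncard hrk hB).symm))
  exact this ▸ hB.indep

lemma circuit_three_le (hn : 4 ≤ n) (hE : M.E = univ) (hrk : RankEq M 3)
    (hsp : SparsePaving M) {C : Set (Fin n)} (hC : Circuit M C) : 3 ≤ C.ncard := by
  by_contra h
  push_neg at h
  have h2 : C.ncard ≤ 2 := by omega
  have hns : ¬ M.Spanning C := fun hS =>
    hC.1.not_indep (spanning_indep_of_small hrk hS (by omega))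
  have hH := hsp C hC hns
  obtain ⟨x, -, hxC⟩ : ∃ x ∈ (univ : Set (Fin n)), x ∉ C := by
    apply Set.exists_mem_notMem_of_ncard_lt_ncard _ (Set.toFinite C)
    rw [Set.ncard_univ, Nat.card_eq_fintype_card, Fintype.card_fin]; omega
  have hcl : M.closure (insert x C) = M.E :=
    hyperplane_closure_insert hH (by rw [hE]; trivial) hxC
  have hspan : M.Spanning (insert x C) :=
    (spanning_iff_closure_eq (by rw [hE]; exact subset_univ _)).mpr hcl
  have hind : M.Indep (insert x C) :=
    spanning_indep_of_small hrk hspan (le_trans (Set.ncard_insert_le x C) (by omega))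
  exact hC.1.not_indep (hind.subset (subset_insert x C))

lemma indep_singleton (hn : 4 ≤ n) (hE : M.E = univ) (hrk : RankEq M 3)
    (hsp : SparsePaving M) (x : Fin n) : M.Indep {x} := by
  by_contra h
  have hdep : M.Dep {x} := dep_of_not_indep h (by rw [hE]; exact subset_univ _)
  obtain ⟨C, hCx, hC⟩ := exists_circuit_subset hdep
  have h3 := circuit_three_le hn hE hrk hsp hC
  have : C.ncard ≤ 1 := le_trans (Set.ncard_le_ncard hCx (Set.toFinite _)) (by simp)
  omega

lemma dep_triple_circuit (hn : 4 ≤ n) (hE : M.E = univ) (hrk : RankEq M 3)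
    (hsp : SparsePaving M) {T : Set (Fin n)} (hT : M.Dep T) (h3 : T.ncard = 3) :
    Circuit M T := by
  obtain ⟨C, hCT, hC⟩ := exists_circuit_subset hT
  have := circuit_three_le hn hE hrk hsp hC
  rwa [← Set.eq_of_subset_of_ncard_le hCT (by omega) (Set.toFinite T)]

lemma circuit3_not_spanning (hrk : RankEq M 3) {C : Set (Fin n)} (hC : Circuit M C)
    (h3 : C.ncard = 3) : ¬ M.Spanning C :=
  fun hS => hC.1.not_indep (spanning_indep_of_small hrk hS (le_of_eq h3))

lemma circuit3_closure_pair (hn : 4 ≤ n) (hE : M.E = univ) (hrk : RankEq M 3)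
    (hsp : SparsePaving M) {C : Set (Fin n)} {x y : Fin n} (hC : Circuit M C)
    (h3 : C.ncard = 3) (hx : x ∈ C) (hy : y ∈ C) (hxy : x ≠ y) :
    M.closure {x, y} = C := by
  have hH := hsp C hC (circuit3_not_spanning hrk hC h3)
  have hpair : ({x, y} : Set (Fin n)) ⊆ C := by
    rintro w (rfl | rfl); exacts [hx, hy]
  have hd1 : (C \ {x, y}).ncard = 1 := by
    rw [Set.ncard_diff hpair, h3, Set.ncard_pair hxy]
  obtain ⟨z, hz⟩ := Set.ncard_eq_one.mp hd1
  have hzC : z ∈ C := by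
    have : z ∈ C \ {x, y} := hz ▸ rfl
    exact this.1
  have hzxy : z ∉ ({x, y} : Set (Fin n)) := by
    have : z ∈ C \ {x, y} := hz ▸ rfl
    exact this.2
  have hCeq : C = insert z {x, y} := by
    ext w
    constructor
    · intro hw
      by_cases hwp : w ∈ ({x, y} : Set (Fin n))
      · exact Set.mem_insert_iff.mpr (Or.inr hwp)
      · have : w ∈ C \ {x, y} := ⟨hw, hwp⟩
        rw [hz, Set.mem_singleton_iff] at this
        rw [this]
        exact Set.mem_insert z _
    · rintro (rfl | hw)
      · exact hzC
      · exact hpair hw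
  have hIndep : M.Indep {x, y} := by
    refine hC.2 _ ?_
    rw [hCeq]
    exact Set.ssubset_insert hzxy
  have hzcl : z ∈ M.closure {x, y} := by
    rw [hIndep.mem_closure_iff_of_notMem hzxy, ← hCeq]
    exact hC.1
  apply Set.Subset.antisymm
  · have := M.closure_subset_closure hpair
    rwa [hH.1.closure] at this
  · intro w hw
    rw [hCeq] at hw
    rcases hw with rfl | hw
    · exact hzcl
    · exact M.subset_closure _ (by rw [hE]; exact subset_univ _) hw

lemma circuits_inter_le_one (hn : 4 ≤ n) (hE : M.E = univ) (hrk : RankEq M 3)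
    (hsp : SparsePaving M) {C C' : Set (Fin n)} (hC : Circuit M C) (hC' : Circuit M C')
    (h3 : C.ncard = 3) (h3' : C'.ncard = 3) (hne : C ≠ C') : (C ∩ C').ncard ≤ 1 := by
  by_contra h
  push_neg at h
  obtain ⟨x, y, hx, hy, hxy⟩ := (Set.one_lt_ncard_iff (Set.toFinite _)).mp h
  apply hne
  rw [← circuit3_closure_pair hn hE hrk hsp hC h3 hx.1 hy.1 hxy,
    ← circuit3_closure_pair hn hE hrk hsp hC' h3' hx.2 hy.2 hxy]

end Rank3

section ContractLemma

variable {n : ℕ} {M : Matroid (Fin n)}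

lemma contract_eq_self_of_disjoint {C : Set (Fin n)} (h : Disjoint C M.E) :
    Contract M C = M := by
  unfold Contract Delete
  rw [Matroid.dual_ground, (sdiff_eq_left (x := M.E) (y := C)).mpr h.symm,
    ← Matroid.dual_ground (M := M), Matroid.restrict_ground_eq_self, Matroid.dual_dual]

lemma dep_singleton_of_contract_base {C B' Bm : Set (Fin n)}
    (hB' : (Contract M C).IsBase B') (hBm : M.IsBase Bm) (hle : Bm.ncard ≤ B'.ncard)
    {x : Fin n} (hxC : x ∈ C) (hxE : x ∈ M.E) : M.Dep {x} := by
  have hB'E : B' ⊆ M.E \ C := by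
    have := hB'.subset_ground
    simpa [Contract, Delete] using this
  have hJstar : M✶.IsBasis ((M.E \ C) \ B') (M.E \ C) := by
    have h1 : (Delete M✶ C).IsBase ((Delete M✶ C).E \ B') := by
      exact (Matroid.dual_isBase_iff (M := Delete M✶ C)
        (B := B') (by simpa [Delete] using hB'E)).mp hB'
    have h2 : (Delete M✶ C).E = M.E \ C := by simp [Delete]
    rw [h2] at h1
    exact (Matroid.isBase_restrict_iff (X := M.E \ C)
      (by rw [Matroid.dual_ground]; exact Set.diff_subset)).mp h1
  have hall : ∀ Bs, M✶.IsBase Bs → x ∈ Bs := by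
    intro Bs hBs
    have hJindep : M✶.Indep (Bs ∩ (M.E \ C)) := hBs.indep.inter_right _
    obtain ⟨J₁, hJ₁, hJJ₁⟩ := hJindep.subset_isBasis_of_subset inter_subset_right
      (by rw [Matroid.dual_ground]; exact Set.diff_subset)
    obtain ⟨Jh, hJh, hJ₁Jh⟩ := hJ₁.indep.exists_isBase_superset
    have hstepA : Jh \ J₁ ⊆ M.E ∩ C := by
      intro y hy
      have hyE : y ∈ M.E := hJh.subset_ground hy.1
      refine ⟨hyE, by_contra fun hyC => ?_⟩
      have hyEC : y ∈ (M.E \ C) \ J₁ := ⟨⟨hyE, hyC⟩, hy.2⟩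
      exact (hJ₁.insert_dep hyEC).not_indep
        (hJh.indep.subset (insert_subset hy.1 hJ₁Jh))
    have hcard : (M.E ∩ C).ncard ≤ (Jh \ J₁).ncard := by
      have hd1 : (Jh \ J₁).ncard = Jh.ncard - J₁.ncard := Set.ncard_diff hJ₁Jh
      have hd2 : J₁.ncard ≤ Jh.ncard := Set.ncard_le_ncard hJ₁Jh (Set.toFinite _)
      have hdualbase : M✶.IsBase (M.E \ Bm) := hBm.compl_isBase_dual
      have hJhBm : Jh.ncard = (M.E \ Bm).ncard := hJh.ncard_eq_ncard_of_isBase hdualbase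
      have hEBm : (M.E \ Bm).ncard = M.E.ncard - Bm.ncard := Set.ncard_diff hBm.subset_ground
      have hBmE : Bm.ncard ≤ M.E.ncard := Set.ncard_le_ncard hBm.subset_ground (Set.toFinite _)
      have hJ₁c : J₁.ncard = ((M.E \ C) \ B').ncard := by
        rw [Set.ncard_def, Set.ncard_def, hJ₁.encard_eq_encard hJstar]
      have hJstarc : ((M.E \ C) \ B').ncard = (M.E \ C).ncard - B'.ncard :=
        Set.ncard_diff hB'E
      have hB'le : B'.ncard ≤ (M.E \ C).ncard := Set.ncard_le_ncard hB'E (Set.toFinite _)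
      have hECeq : M.E ∩ C = M.E \ (M.E \ C) := (Set.diff_diff_right_self _ _).symm
      have hCEc : (M.E ∩ C).ncard = M.E.ncard - (M.E \ C).ncard := by
        rw [hECeq]; exact Set.ncard_diff diff_subset
      have hECle : (M.E \ C).ncard ≤ M.E.ncard :=
        Set.ncard_le_ncard diff_subset (Set.toFinite _)
      omega
    have hstepC : Jh \ J₁ = M.E ∩ C := Set.eq_of_subset_of_ncard_le hstepA hcard
    have hBsJh : Bs ⊆ Jh := by
      intro y hy
      by_cases hyEC : y ∈ M.E \ C
      · exact hJ₁Jh (hJJ₁ ⟨hy, hyEC⟩)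
      · have hyE : y ∈ M.E := hBs.subset_ground hy
        have hyC : y ∈ C := by
          by_contra hc; exact hyEC ⟨hyE, hc⟩
        have : y ∈ Jh \ J₁ := hstepC ▸ ⟨hyE, hyC⟩
        exact this.1
    have : Bs = Jh := hBs.eq_of_subset_isBase hJh hBsJh
    rw [this]
    have : x ∈ Jh \ J₁ := hstepC ▸ ⟨hxE, hxC⟩
    exact this.1
  rw [Matroid.dep_iff]
  refine ⟨fun hind => ?_, singleton_subset_iff.2 hxE⟩
  have hdd : M✶✶.Indep {x} := by rwa [Matroid.dual_dual]
  rw [Matroid.dual_indep_iff_exists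
    (by rw [Matroid.dual_ground]; exact singleton_subset_iff.2 hxE)] at hdd
  obtain ⟨B, hB, hdis⟩ := hdd
  exact disjoint_left.mp hdis rfl (hall B hB)

/-- Normalisation of a rank-3 minor of a rank-3 matroid with no small circuits. -/
lemma minor_eq_restrict (hn : 4 ≤ n) (hE : M.E = univ) (hrk : RankEq M 3)
    (hsp : SparsePaving M) {N : Matroid (Fin n)} (hmin : IsMinor N M)
    (hrkN : RankEq N 3) : N = M ↾ N.E := by
  obtain ⟨C, D, rfl⟩ := hmin
  obtain ⟨BN, hBN, hBN3⟩ := hrkN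
  obtain ⟨Bm, hBm, hBm3⟩ := hrk
  -- BN extends to a base of Contract M C
  have hBN' : (Contract M C).Indep BN := by
    have := hBN
    rw [Delete] at this
    exact (Matroid.isBase_restrict_iff'.mp this).indep
  obtain ⟨B', hB', hBNB'⟩ := hBN'.exists_isBase_superset
  have hle : Bm.ncard ≤ B'.ncard := by
    rw [hBm3, ← hBN3]
    exact Set.ncard_le_ncard hBNB' (Set.toFinite _)
  have hCdisj : Disjoint C M.E := by
    rw [disjoint_left]
    intro x hxC hxE
    exact (dep_singleton_of_contract_base hB' hBm hle hxC hxE).not_indep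
      (indep_singleton hn hE ⟨Bm, hBm, hBm3⟩ hsp x)
  rw [contract_eq_self_of_disjoint hCdisj]
  rfl

end ContractLemma

section Comb

variable {γ : Type*} [Finite γ]

lemma exists_fun6 {p q r s t u : γ} (h1 : p ≠ q) (h2 : p ≠ r) (h3 : p ≠ s) (h4 : p ≠ t)
    (h5 : p ≠ u) (h6 : q ≠ r) (h7 : q ≠ s) (h8 : q ≠ t) (h9 : q ≠ u) (h10 : r ≠ s)
    (h11 : r ≠ t) (h12 : r ≠ u) (h13 : s ≠ t) (h14 : s ≠ u) (h15 : t ≠ u) :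
    ∃ a : Fin 6 → γ, Function.Injective a ∧ a 0 = p ∧ a 1 = q ∧ a 2 = r ∧ a 3 = s ∧
      a 4 = t ∧ a 5 = u ∧ Set.range a = {p,q,r,s,t,u} := by
  refine ⟨fun i => if i.val = 0 then p else if i.val = 1 then q else if i.val = 2 then r
    else if i.val = 3 then s else if i.val = 4 then t else u, ?_, rfl, rfl, rfl, rfl, rfl, rfl, ?_⟩
  · intro i j hij
    fin_cases i <;> fin_cases j <;> simp_all
  · ext w
    simp only [Set.mem_range, Set.mem_insert_iff, Set.mem_singleton_iff]
    constructor
    · rintro ⟨i, rfl⟩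
      fin_cases i <;> simp
    · rintro (rfl | rfl | rfl | rfl | rfl | rfl)
      exacts [⟨0, rfl⟩, ⟨1, rfl⟩, ⟨2, rfl⟩, ⟨3, rfl⟩, ⟨4, rfl⟩, ⟨5, rfl⟩]

lemma triple_structure {S T1 T2 T3 : Set γ}
    (hS : S.ncard = 6) (h1 : T1 ⊆ S) (h2 : T2 ⊆ S) (h3 : T3 ⊆ S)
    (c1 : T1.ncard = 3) (c2 : T2.ncard = 3) (c3 : T3.ncard = 3)
    (i12 : (T1 ∩ T2).ncard ≤ 1) (i13 : (T1 ∩ T3).ncard ≤ 1) (i23 : (T2 ∩ T3).ncard ≤ 1) :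
    ∃ a : Fin 6 → γ, Function.Injective a ∧ Set.range a = S ∧
      T1 ∪ T2 ∪ T3 = S ∧
      T1 = {a 0, a 1, a 2} ∧ T2 = {a 2, a 3, a 4} ∧ T3 = {a 4, a 5, a 0} := by
  have e1 : (T1 ∪ T2).ncard + (T1 ∩ T2).ncard = 6 := by
    rw [Set.ncard_union_add_ncard_inter, c1, c2]
  have e2 : (T1 ∪ T2 ∪ T3).ncard + ((T1 ∪ T2) ∩ T3).ncard = (T1 ∪ T2).ncard + 3 := by
    rw [Set.ncard_union_add_ncard_inter, c3]
  have e3 : (T1 ∪ T2) ∩ T3 = (T1 ∩ T3) ∪ (T2 ∩ T3) := Set.union_inter_distrib_right ..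
  have e4 : ((T1 ∩ T3) ∪ (T2 ∩ T3)).ncard + ((T1 ∩ T3) ∩ (T2 ∩ T3)).ncard
      = (T1 ∩ T3).ncard + (T2 ∩ T3).ncard := by
    rw [Set.ncard_union_add_ncard_inter]
  have e5 : (T1 ∪ T2 ∪ T3).ncard ≤ 6 := by
    rw [← hS]
    exact Set.ncard_le_ncard (union_subset (union_subset h1 h2) h3) (Set.toFinite _)
  rw [e3] at e2
  -- forced equalities
  have hi12 : (T1 ∩ T2).ncard = 1 := by omega
  have hi13 : (T1 ∩ T3).ncard = 1 := by omega
  have hi23 : (T2 ∩ T3).ncard = 1 := by omega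
  have hU6 : (T1 ∪ T2 ∪ T3).ncard = 6 := by omega
  have htrip0 : ((T1 ∩ T3) ∩ (T2 ∩ T3)).ncard = 0 := by omega
  have hU : T1 ∪ T2 ∪ T3 = S :=
    Set.eq_of_subset_of_ncard_le (union_subset (union_subset h1 h2) h3) (by omega)
  have htrip : (T1 ∩ T3) ∩ (T2 ∩ T3) = ∅ := by
    rwa [Set.ncard_eq_zero] at htrip0
  obtain ⟨p2, hp2⟩ := Set.ncard_eq_one.mp hi12
  obtain ⟨p0, hp0⟩ := Set.ncard_eq_one.mp hi13
  obtain ⟨p4, hp4⟩ := Set.ncard_eq_one.mp hi23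
  have hp2T1 : p2 ∈ T1 := (show p2 ∈ T1 ∩ T2 from hp2 ▸ rfl).1
  have hp2T2 : p2 ∈ T2 := (show p2 ∈ T1 ∩ T2 from hp2 ▸ rfl).2
  have hp0T1 : p0 ∈ T1 := (show p0 ∈ T1 ∩ T3 from hp0 ▸ rfl).1
  have hp0T3 : p0 ∈ T3 := (show p0 ∈ T1 ∩ T3 from hp0 ▸ rfl).2
  have hp4T2 : p4 ∈ T2 := (show p4 ∈ T2 ∩ T3 from hp4 ▸ rfl).1
  have hp4T3 : p4 ∈ T3 := (show p4 ∈ T2 ∩ T3 from hp4 ▸ rfl).2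
  have hp0T2 : p0 ∉ T2 := fun h => by
    have : p0 ∈ (T1 ∩ T3) ∩ (T2 ∩ T3) := ⟨⟨hp0T1, hp0T3⟩, ⟨h, hp0T3⟩⟩
    rw [htrip] at this; exact this
  have hp2T3 : p2 ∉ T3 := fun h => by
    have : p2 ∈ (T1 ∩ T3) ∩ (T2 ∩ T3) := ⟨⟨hp2T1, h⟩, ⟨hp2T2, h⟩⟩
    rw [htrip] at this; exact this
  have hp4T1 : p4 ∉ T1 := fun h => by
    have : p4 ∈ (T1 ∩ T3) ∩ (T2 ∩ T3) := ⟨⟨h, hp4T3⟩, ⟨hp4T2, hp4T3⟩⟩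
    rw [htrip] at this; exact this
  -- the third elements
  have hthird : ∀ (A B C' : Set γ) (q r : γ), A.ncard = 3 → A ∩ B = {q} → A ∩ C' = {r} →
      q ≠ r → ∃ t, A \ (B ∪ C') = {t} := by
    intro A B C' q r hA hq hr hqr
    apply Set.ncard_eq_one.mp
    have hABC : A ∩ (B ∪ C') = {q, r} := by
      rw [Set.inter_union_distrib_left, hq, hr]
      rfl
    have hsub : A ∩ (B ∪ C') ⊆ A := inter_subset_left
    have : A \ (B ∪ C') = A \ (A ∩ (B ∪ C')) := by
      rw [Set.diff_self_inter]
    rw [this, Set.ncard_diff hsub, hABC, hA, Set.ncard_pair hqr]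
  have hp2p0 : p2 ≠ p0 := fun h => hp2T3 (h ▸ hp0T3)
  have hp2p4 : p2 ≠ p4 := fun h => hp4T1 (h.symm ▸ hp2T1)
  have hp0p4 : p0 ≠ p4 := fun h => hp0T2 (h ▸ hp4T2)
  obtain ⟨t1, ht1⟩ := hthird T1 T2 T3 p2 p0 c1 hp2 hp0 hp2p0
  obtain ⟨t3, ht3⟩ := hthird T2 T1 T3 p2 p4 c2 (by rw [Set.inter_comm]; exact hp2) hp4 hp2p4
  obtain ⟨t5, ht5⟩ := hthird T3 T1 T2 p0 p4 c3 (by rw [Set.inter_comm]; exact hp0)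
    (by rw [Set.inter_comm]; exact hp4) hp0p4
  have ht1m : t1 ∈ T1 ∧ t1 ∉ T2 ∧ t1 ∉ T3 := by
    have : t1 ∈ T1 \ (T2 ∪ T3) := ht1 ▸ rfl
    exact ⟨this.1, fun h => this.2 (Or.inl h), fun h => this.2 (Or.inr h)⟩
  have ht3m : t3 ∈ T2 ∧ t3 ∉ T1 ∧ t3 ∉ T3 := by
    have : t3 ∈ T2 \ (T1 ∪ T3) := ht3 ▸ rfl
    exact ⟨this.1, fun h => this.2 (Or.inl h), fun h => this.2 (Or.inr h)⟩
  have ht5m : t5 ∈ T3 ∧ t5 ∉ T1 ∧ t5 ∉ T2 := by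
    have : t5 ∈ T3 \ (T1 ∪ T2) := ht5 ▸ rfl
    exact ⟨this.1, fun h => this.2 (Or.inl h), fun h => this.2 (Or.inr h)⟩
  obtain ⟨ht1T1, ht1T2, ht1T3⟩ := ht1m
  obtain ⟨ht3T2, ht3T1, ht3T3⟩ := ht3m
  obtain ⟨ht5T3, ht5T1, ht5T2⟩ := ht5m
  -- distinctness
  have d01 : p0 ≠ t1 := fun h => ht1T3 (h ▸ hp0T3)
  have d03 : p0 ≠ t3 := fun h => ht3T1 (h ▸ hp0T1)
  have d05 : p0 ≠ t5 := fun h => ht5T1 (h ▸ hp0T1)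
  have d21 : p2 ≠ t1 := fun h => ht1T2 (h ▸ hp2T2)
  have d23 : p2 ≠ t3 := fun h => ht3T1 (h ▸ hp2T1)
  have d25 : p2 ≠ t5 := fun h => ht5T1 (h ▸ hp2T1)
  have d41 : p4 ≠ t1 := fun h => ht1T2 (h ▸ hp4T2)
  have d43 : p4 ≠ t3 := fun h => ht3T3 (h ▸ hp4T3)
  have d45 : p4 ≠ t5 := fun h => ht5T2 (h ▸ hp4T2)
  have d13 : t1 ≠ t3 := fun h => ht3T1 (h ▸ ht1T1)
  have d15 : t1 ≠ t5 := fun h => ht5T1 (h ▸ ht1T1)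
  have d35 : t3 ≠ t5 := fun h => ht5T2 (h ▸ ht3T2)
  obtain ⟨a, hainj, ha0, ha1, ha2, ha3, ha4, ha5, harange⟩ :=
    exists_fun6 d01 hp2p0.symm d03 hp0p4 d05 d21.symm d13 d41.symm d15 d23 hp2p4 d25
      d43.symm d35 d45
  have hT1 : T1 = {p0, t1, p2} := by
    symm
    refine Set.eq_of_subset_of_ncard_le ?_ ?_ (Set.toFinite _)
    · rintro w (rfl | rfl | rfl); exacts [hp0T1, ht1T1, hp2T1]
    · rw [c1, Set.ncard_insert_of_notMem (by simp [d01, hp2p0.symm]),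
        Set.ncard_pair d21.symm]
  have hT2 : T2 = {p2, t3, p4} := by
    symm
    refine Set.eq_of_subset_of_ncard_le ?_ ?_ (Set.toFinite _)
    · rintro w (rfl | rfl | rfl); exacts [hp2T2, ht3T2, hp4T2]
    · rw [c2, Set.ncard_insert_of_notMem (by simp [d23, hp2p4]),
        Set.ncard_pair d43.symm]
  have hT3 : T3 = {p4, t5, p0} := by
    symm
    refine Set.eq_of_subset_of_ncard_le ?_ ?_ (Set.toFinite _)
    · rintro w (rfl | rfl | rfl); exacts [hp4T3, ht5T3, hp0T3]
    · rw [c3, Set.ncard_insert_of_notMem (by simp [d45, hp0p4.symm]),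
        Set.ncard_pair d05.symm]
  refine ⟨a, hainj, ?_, hU, ?_, ?_, ?_⟩
  · rw [harange]
    refine Set.eq_of_subset_of_ncard_le ?_ ?_ (Set.toFinite _)
    · rintro w (rfl | rfl | rfl | rfl | rfl | rfl)
      exacts [h1 hp0T1, h1 ht1T1, h1 hp2T1, h2 ht3T2, h2 hp4T2, h3 ht5T3]
    · rw [hS, Set.ncard_insert_of_notMem (by simp [d01, hp2p0.symm, d03, hp0p4, d05]),
        Set.ncard_insert_of_notMem (by simp [d21.symm, d13, d41.symm, d15]),
        Set.ncard_insert_of_notMem (by simp [d23, hp2p4, d25]),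
        Set.ncard_insert_of_notMem (by simp [d43.symm, d35]),
        Set.ncard_pair d45]
  · rw [ha0, ha1, ha2]; exact hT1
  · rw [ha2, ha3, ha4]; exact hT2
  · rw [ha4, ha5, ha0]; exact hT3

lemma fourth_triple {S T1 T2 T3 T4 : Set γ} {a : Fin 6 → γ}
    (hainj : Function.Injective a) (harange : Set.range a = S) (hU : T1 ∪ T2 ∪ T3 = S)
    (hT1 : T1 = {a 0, a 1, a 2}) (hT2 : T2 = {a 2, a 3, a 4}) (hT3 : T3 = {a 4, a 5, a 0})
    (h4S : T4 ⊆ S) (c4 : T4.ncard = 3)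
    (i41 : (T4 ∩ T1).ncard ≤ 1) (i42 : (T4 ∩ T2).ncard ≤ 1) (i43 : (T4 ∩ T3).ncard ≤ 1) :
    T4 = {a 1, a 3, a 5} := by
  have hane : ∀ i j : Fin 6, i ≠ j → a i ≠ a j := fun i j hij h => hij (hainj h)
  -- a general step: if x ∈ T4 with x ∈ A ∩ B (A, B two of the triples, x not in third C'),
  -- and remaining elements must avoid A and B, they lie in C'; C' \ (A ∪ B) too small.
  have key : ∀ (A B C' : Set γ) (x : γ), T4 ∩ A = T4 ∩ A → x ∈ A → x ∈ B → x ∉ C' →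
      A ∪ B ∪ C' = S → (T4 ∩ A).ncard ≤ 1 → (T4 ∩ B).ncard ≤ 1 → (T4 ∩ C').ncard ≤ 1 →
      x ∉ T4 := by
    intro A B C' x _ hxA hxB hxC hUn iA iB iC hxT4
    have hrest : T4 \ {x} ⊆ T4 ∩ C' := by
      intro w hw
      have hwS : w ∈ S := h4S hw.1
      have hwx : w ≠ x := hw.2
      have hwA : w ∉ A := fun hwA => by
        have : ({x, w} : Set γ) ⊆ T4 ∩ A := by
          rintro v (rfl | rfl); exacts [⟨hxT4, hxA⟩, ⟨hw.1, hwA⟩]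
        have := Set.ncard_le_ncard this (Set.toFinite _)
        rw [Set.ncard_pair (Ne.symm hwx)] at this
        omega
      have hwB : w ∉ B := fun hwB => by
        have : ({x, w} : Set γ) ⊆ T4 ∩ B := by
          rintro v (rfl | rfl); exacts [⟨hxT4, hxB⟩, ⟨hw.1, hwB⟩]
        have := Set.ncard_le_ncard this (Set.toFinite _)
        rw [Set.ncard_pair (Ne.symm hwx)] at this
        omega
      have hwC : w ∈ C' := by
        rw [← hUn] at hwS
        rcases hwS with (h | h) | h
        · exact absurd h hwA
        · exact absurd h hwB
        · exact h
      exact ⟨hw.1, hwC⟩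
    have h2 : (T4 \ {x}).ncard = 2 := by
      rw [Set.ncard_diff (by simpa using hxT4), c4, Set.ncard_singleton]
    have := Set.ncard_le_ncard hrest (Set.toFinite _)
    omega
  have hUn1 : T1 ∪ T3 ∪ T2 = S := by rw [← hU]; ac_rfl
  have hUn2 : T1 ∪ T2 ∪ T3 = S := hU
  have hUn3 : T2 ∪ T3 ∪ T1 = S := by rw [← hU]; ac_rfl
  have ha0T4 : a 0 ∉ T4 := by
    refine key T1 T3 T2 (a 0) rfl (by rw [hT1]; simp) (by rw [hT3]; simp) ?_ hUn1 i41 i43 i42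
    rw [hT2]
    simp only [Set.mem_insert_iff, Set.mem_singleton_iff]
    push_neg
    exact ⟨hane 0 2 (by decide), hane 0 3 (by decide), hane 0 4 (by decide)⟩
  have ha2T4 : a 2 ∉ T4 := by
    refine key T1 T2 T3 (a 2) rfl (by rw [hT1]; simp) (by rw [hT2]; simp) ?_ hUn2 i41 i42 i43
    rw [hT3]
    simp only [Set.mem_insert_iff, Set.mem_singleton_iff]
    push_neg
    exact ⟨hane 2 4 (by decide), hane 2 5 (by decide), hane 2 0 (by decide)⟩
  have ha4T4 : a 4 ∉ T4 := by
    refine key T2 T3 T1 (a 4) rfl (by rw [hT2]; simp) (by rw [hT3]; simp) ?_ hUn3 i42 i43 i41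
    rw [hT1]
    simp only [Set.mem_insert_iff, Set.mem_singleton_iff]
    push_neg
    exact ⟨hane 4 0 (by decide), hane 4 1 (by decide), hane 4 2 (by decide)⟩
  have hsub : T4 ⊆ {a 1, a 3, a 5} := by
    intro w hw
    have hwS : w ∈ S := h4S hw
    rw [← harange] at hwS
    obtain ⟨i, rfl⟩ := hwS
    fin_cases i
    · exact absurd hw ha0T4
    · exact Or.inl rfl
    · exact absurd hw ha2T4
    · exact Or.inr (Or.inl rfl)
    · exact absurd hw ha4T4
    · exact Or.inr (Or.inr rfl)
  refine Set.eq_of_subset_of_ncard_le hsub ?_ (Set.toFinite _)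
  rw [c4, Set.ncard_insert_of_notMem
      (by simp only [Set.mem_insert_iff, Set.mem_singleton_iff]; push_neg;
          exact ⟨hane 1 3 (by decide), hane 1 5 (by decide)⟩),
    Set.ncard_pair (hane 3 5 (by decide))]

end Comb

section Build

variable {n : ℕ} {M : Matroid (Fin n)}

lemma restrict_is_minor (hE : M.E = univ) (S : Set (Fin n)) : IsMinor (M ↾ S) M := by
  refine ⟨∅, Sᶜ, ?_⟩
  rw [contract_eq_self_of_disjoint (Set.empty_disjoint M.E)]
  show M ↾ S = M ↾ (M.E \ Sᶜ)
  rw [hE]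
  congr 1
  ext x; simp

lemma build (hn : 4 ≤ n) (hE : M.E = univ) (hrk : RankEq M 3) (hsp : SparsePaving M)
    {S T1 T2 T3 : Set (Fin n)} (hS6 : S.ncard = 6)
    (hC1 : Circuit M T1) (hc1 : T1.ncard = 3) (h1S : T1 ⊆ S)
    (hC2 : Circuit M T2) (hc2 : T2.ncard = 3) (h2S : T2 ⊆ S)
    (hC3 : Circuit M T3) (hc3 : T3.ncard = 3) (h3S : T3 ⊆ S)
    (hne12 : T1 ≠ T2) (hne13 : T1 ≠ T3) (hne23 : T2 ≠ T3) :
    (∃ N, IsMinor N M ∧ IsWhirl3 N) ∨ (∃ N, IsMinor N M ∧ IsMK4 N) := by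
  have i12 := circuits_inter_le_one hn hE hrk hsp hC1 hC2 hc1 hc2 hne12
  have i13 := circuits_inter_le_one hn hE hrk hsp hC1 hC3 hc1 hc3 hne13
  have i23 := circuits_inter_le_one hn hE hrk hsp hC2 hC3 hc2 hc3 hne23
  obtain ⟨a, hainj, harange, hU, hT1, hT2, hT3⟩ :=
    triple_structure hS6 h1S h2S h3S hc1 hc2 hc3 i12 i13 i23
  have hane : ∀ i j : Fin 6, i ≠ j → a i ≠ a j := fun i j hij h => hij (hainj h)
  have hSE : S ⊆ M.E := by rw [hE]; exact subset_univ S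
  have haS : ∀ i, a i ∈ S := fun i => harange ▸ ⟨i, rfl⟩
  set N := M ↾ S with hN
  have hNE : N.E = S := Matroid.restrict_ground_eq
  have hNmin : IsMinor N M := restrict_is_minor hE S
  have crN : ∀ c, Circuit N c ↔ Circuit M c ∧ c ⊆ S := fun c => restrict_circuit_iff M hSE
  -- characterization of 3-circuits inside S
  have hchar : ∀ c, Circuit M c → c.ncard = 3 → c ⊆ S →
      (c = T1 ∨ c = T2 ∨ c = T3 ∨ c = {a 1, a 3, a 5}) := by
    intro c hc h3 hcS
    by_cases e1 : c = T1
    · exact Or.inl e1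
    by_cases e2 : c = T2
    · exact Or.inr (Or.inl e2)
    by_cases e3 : c = T3
    · exact Or.inr (Or.inr (Or.inl e3))
    refine Or.inr (Or.inr (Or.inr ?_))
    exact fourth_triple hainj harange hU hT1 hT2 hT3 hcS h3
      (circuits_inter_le_one hn hE hrk hsp hc hC1 h3 hc1 e1)
      (circuits_inter_le_one hn hE hrk hsp hc hC2 h3 hc2 e2)
      (circuits_inter_le_one hn hE hrk hsp hc hC3 h3 hc3 e3)
  -- an independent triple in S
  have n013 : ({a 0, a 1, a 3} : Set (Fin n)).ncard = 3 := by
    rw [Set.ncard_insert_of_notMem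
        (by simp only [Set.mem_insert_iff, Set.mem_singleton_iff]; push_neg;
            exact ⟨hane 0 1 (by decide), hane 0 3 (by decide)⟩),
      Set.ncard_pair (hane 1 3 (by decide))]
  have hsub013 : ({a 0, a 1, a 3} : Set (Fin n)) ⊆ S := by
    rintro w (rfl | rfl | rfl); exacts [haS 0, haS 1, haS 3]
  have hB0 : M.IsBase {a 0, a 1, a 3} := by
    refine indep_base3 hrk ?_ n013
    by_contra hdep
    have hdep' : M.Dep {a 0, a 1, a 3} := dep_of_not_indep hdep (by rw [hE]; exact subset_univ _)
    have hcirc := dep_triple_circuit hn hE hrk hsp hdep' n013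
    rcases hchar _ hcirc n013 hsub013 with h | h | h | h
    · rw [hT1] at h
      have : a 3 ∈ ({a 0, a 1, a 2} : Set (Fin n)) := h ▸ (by simp)
      simp only [Set.mem_insert_iff, Set.mem_singleton_iff] at this
      rcases this with h' | h' | h'
      exacts [hane 3 0 (by decide) h', hane 3 1 (by decide) h', hane 3 2 (by decide) h']
    · rw [hT2] at h
      have : a 0 ∈ ({a 2, a 3, a 4} : Set (Fin n)) := h ▸ (by simp)
      simp only [Set.mem_insert_iff, Set.mem_singleton_iff] at this
      rcases this with h' | h' | h'
      exacts [hane 0 2 (by decide) h', hane 0 3 (by decide) h', hane 0 4 (by decide) h']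
    · rw [hT3] at h
      have : a 1 ∈ ({a 4, a 5, a 0} : Set (Fin n)) := h ▸ (by simp)
      simp only [Set.mem_insert_iff, Set.mem_singleton_iff] at this
      rcases this with h' | h' | h'
      exacts [hane 1 4 (by decide) h', hane 1 5 (by decide) h', hane 1 0 (by decide) h']
    · have : a 0 ∈ ({a 1, a 3, a 5} : Set (Fin n)) := h ▸ (by simp)
      simp only [Set.mem_insert_iff, Set.mem_singleton_iff] at this
      rcases this with h' | h' | h'
      exacts [hane 0 1 (by decide) h', hane 0 3 (by decide) h', hane 0 5 (by decide) h']
  have hNbase : N.IsBase {a 0, a 1, a 3} := by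
    rw [hN, Matroid.isBase_restrict_iff hSE]
    exact hB0.indep.isBasis_of_subset_of_subset_closure hsub013
      (by rw [hB0.closure_eq, hE]; exact subset_univ S)
  have hrkN : RankEq N 3 := ⟨_, hNbase, n013⟩
  -- sparse paving for N
  have hspN : SparsePaving N := by
    intro c hc hns
    obtain ⟨hcM, hcS⟩ := (crN c).mp hc
    have h3le : 3 ≤ c.ncard := circuit_three_le hn hE hrk hsp hcM
    obtain ⟨e, he⟩ : c.Nonempty := hcM.1.nonempty
    have hceN : N.Indep (c \ {e}) := hc.2 _ (Set.sdiff_singleton_ssubset.mpr he)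
    have hceM : M.Indep (c \ {e}) := ((Matroid.restrict_indep_iff).mp hceN).1
    have hle3 : (c \ {e}).ncard ≤ 3 := indep_ncard_le hrk hceM
    have hdc : (c \ {e}).ncard = c.ncard - 1 := by
      rw [Set.ncard_diff (by simpa using he), Set.ncard_singleton]
    have hnot4 : c.ncard ≠ 4 := by
      intro h4
      have hbase : M.IsBase (c \ {e}) := indep_base3 hrk hceM (by omega)
      have hNb : N.IsBase (c \ {e}) := by
        rw [hN, Matroid.isBase_restrict_iff hSE]
        exact hbase.indep.isBasis_of_subset_of_subset_closure (diff_subset.trans hcS)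
          (by rw [hbase.closure_eq, hE]; exact subset_univ S)
      exact hns (hNb.spanning.superset diff_subset (by rw [hNE]; exact hcS))
    have h3 : c.ncard = 3 := by omega
    have hH := hsp c hcM (circuit3_not_spanning hrk hcM h3)
    refine ⟨?_, ?_, ?_⟩
    · have hcl : N.closure c = c := by
        rw [hN, restrict_closure M hSE hcS, hH.1.closure]
        exact inter_eq_self_of_subset_left hcS
      rw [← hcl]
      exact flat_closure N c
    · rw [hNE]
      intro heq
      rw [heq, hS6] at h3
      omega
    · intro F hF hcF
      obtain ⟨w, hwF, hwc⟩ := exists_of_ssubset hcF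
      have hwS : w ∈ S := hNE ▸ hF.subset_ground hwF
      have hclM : M.closure (insert w c) = M.E :=
        hyperplane_closure_insert hH (by rw [hE]; trivial) hwc
      have hNcl : N.closure (insert w c) = S := by
        rw [hN, restrict_closure M hSE (insert_subset hwS hcS), hclM, hE, univ_inter]
      have hSF : S ⊆ F := by
        rw [← hNcl, ← hF.closure]
        exact N.closure_subset_closure (insert_subset hwF hcF.subset)
      rw [hNE]
      exact Set.Subset.antisymm (hNE ▸ hF.subset_ground) hSF
  -- the two cases
  have hn135 : ({a 1, a 3, a 5} : Set (Fin n)).ncard = 3 := by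
    rw [Set.ncard_insert_of_notMem
        (by simp only [Set.mem_insert_iff, Set.mem_singleton_iff]; push_neg;
            exact ⟨hane 1 3 (by decide), hane 1 5 (by decide)⟩),
      Set.ncard_pair (hane 3 5 (by decide))]
  have hsub135 : ({a 1, a 3, a 5} : Set (Fin n)) ⊆ S := by
    rintro w (rfl | rfl | rfl); exacts [haS 1, haS 3, haS 5]
  by_cases h4 : M.Indep {a 1, a 3, a 5}
  · left
    refine ⟨N, hNmin, a, hainj, by rw [hNE, harange], hrkN, hspN, fun c => ?_⟩
    rw [← hT1, ← hT2, ← hT3]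
    constructor
    · rintro ⟨hc, h3⟩
      obtain ⟨hcM, hcS⟩ := (crN c).mp hc
      rcases hchar c hcM h3 hcS with h | h | h | h
      exacts [Or.inl h, Or.inr (Or.inl h), Or.inr (Or.inr h),
        absurd h4 (h ▸ hcM.1).not_indep]
    · rintro (rfl | rfl | rfl)
      exacts [⟨(crN _).mpr ⟨hC1, h1S⟩, hc1⟩, ⟨(crN _).mpr ⟨hC2, h2S⟩, hc2⟩,
        ⟨(crN _).mpr ⟨hC3, h3S⟩, hc3⟩]
  · right
    have hdep : M.Dep {a 1, a 3, a 5} := dep_of_not_indep h4 (by rw [hE]; exact subset_univ _)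
    have hC4 : Circuit M {a 1, a 3, a 5} := dep_triple_circuit hn hE hrk hsp hdep hn135
    refine ⟨N, hNmin, a, hainj, by rw [hNE, harange], hrkN, hspN, fun c => ?_⟩
    rw [← hT1, ← hT2, ← hT3]
    constructor
    · rintro ⟨hc, h3⟩
      obtain ⟨hcM, hcS⟩ := (crN c).mp hc
      exact hchar c hcM h3 hcS
    · rintro (rfl | rfl | rfl | rfl)
      exacts [⟨(crN _).mpr ⟨hC1, h1S⟩, hc1⟩, ⟨(crN _).mpr ⟨hC2, h2S⟩, hc2⟩,
        ⟨(crN _).mpr ⟨hC3, h3S⟩, hc3⟩, ⟨(crN _).mpr ⟨hC4, hsub135⟩, hn135⟩]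

end Build

section Main

variable {n : ℕ} {M : Matroid (Fin n)}

lemma reverse_dir (hn : 4 ≤ n) (hE : M.E = univ) (hrk : RankEq M 3) (hsp : SparsePaving M)
    (hbound : ∀ S : Set (Fin n), S.ncard = 6 →
      {c : Set (Fin n) | Circuit M c ∧ c.ncard = 3 ∧ c ⊆ S}.ncard ≤ 2)
    {N : Matroid (Fin n)} (hmin : IsMinor N M) {a : Fin 6 → Fin n}
    (hainj : Function.Injective a) (haE : N.E = Set.range a) (hrkN : RankEq N 3)
    (hc1 : Circuit N {a 0, a 1, a 2} ∧ ({a 0, a 1, a 2} : Set (Fin n)).ncard = 3)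
    (hc2 : Circuit N {a 2, a 3, a 4} ∧ ({a 2, a 3, a 4} : Set (Fin n)).ncard = 3)
    (hc3 : Circuit N {a 4, a 5, a 0} ∧ ({a 4, a 5, a 0} : Set (Fin n)).ncard = 3) :
    False := by
  have hane : ∀ i j : Fin 6, i ≠ j → a i ≠ a j := fun i j hij h => hij (hainj h)
  have hres : N = M ↾ Set.range a := by
    rw [← haE]
    exact minor_eq_restrict hn hE hrk hsp hmin hrkN
  have hSE : Set.range a ⊆ M.E := by rw [hE]; exact subset_univ _
  have crN : ∀ c, Circuit N c ↔ Circuit M c ∧ c ⊆ Set.range a := by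
    intro c
    rw [hres]
    exact restrict_circuit_iff M hSE
  have hS6 : (Set.range a).ncard = 6 := by
    rw [← Set.image_univ, Set.ncard_image_of_injective _ hainj, Set.ncard_univ,
      Nat.card_eq_fintype_card, Fintype.card_fin]
  have hb := hbound _ hS6
  set T1 : Set (Fin n) := {a 0, a 1, a 2} with hT1
  set T2 : Set (Fin n) := {a 2, a 3, a 4} with hT2
  set T3 : Set (Fin n) := {a 4, a 5, a 0} with hT3
  have hm1 : Circuit M T1 ∧ T1 ⊆ Set.range a := (crN T1).mp hc1.1
  have hm2 : Circuit M T2 ∧ T2 ⊆ Set.range a := (crN T2).mp hc2.1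
  have hm3 : Circuit M T3 ∧ T3 ⊆ Set.range a := (crN T3).mp hc3.1
  have hne12 : T1 ≠ T2 := fun h => by
    have : a 0 ∈ T2 := h ▸ (by rw [hT1]; simp)
    rw [hT2] at this
    simp only [Set.mem_insert_iff, Set.mem_singleton_iff] at this
    rcases this with h' | h' | h'
    exacts [hane 0 2 (by decide) h', hane 0 3 (by decide) h', hane 0 4 (by decide) h']
  have hne13 : T1 ≠ T3 := fun h => by
    have : a 1 ∈ T3 := h ▸ (by rw [hT1]; simp)
    rw [hT3] at this
    simp only [Set.mem_insert_iff, Set.mem_singleton_iff] at this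
    rcases this with h' | h' | h'
    exacts [hane 1 4 (by decide) h', hane 1 5 (by decide) h', hane 1 0 (by decide) h']
  have hne23 : T2 ≠ T3 := fun h => by
    have : a 2 ∈ T3 := h ▸ (by rw [hT2]; simp)
    rw [hT3] at this
    simp only [Set.mem_insert_iff, Set.mem_singleton_iff] at this
    rcases this with h' | h' | h'
    exacts [hane 2 4 (by decide) h', hane 2 5 (by decide) h', hane 2 0 (by decide) h']
  have hsub : ({T1, T2, T3} : Set (Set (Fin n))) ⊆
      {c : Set (Fin n) | Circuit M c ∧ c.ncard = 3 ∧ c ⊆ Set.range a} := by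
    rintro c (rfl | rfl | rfl)
    exacts [⟨hm1.1, hc1.2, hm1.2⟩, ⟨hm2.1, hc2.2, hm2.2⟩, ⟨hm3.1, hc3.2, hm3.2⟩]
  have h3c : ({T1, T2, T3} : Set (Set (Fin n))).ncard = 3 := by
    rw [Set.ncard_insert_of_notMem
        (by simp only [Set.mem_insert_iff, Set.mem_singleton_iff]; push_neg;
            exact ⟨hne12, hne13⟩),
      Set.ncard_pair hne23]
  have := Set.ncard_le_ncard hsub (Set.toFinite _)
  omega

theorem rank3_sparse_paving_WFree_iff_RuzsaSzemeredi' (hn : 4 ≤ n)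
    (hE : M.E = Set.univ) (hrk : RankEq M 3) (hsp : SparsePaving M) :
    WFree M ↔
      ∀ S : Set (Fin n), S.ncard = 6 →
        {c : Set (Fin n) | Circuit M c ∧ c.ncard = 3 ∧ c ⊆ S}.ncard ≤ 2 := by
  constructor
  · intro hW S hS6
    by_contra hcount
    push_neg at hcount
    obtain ⟨𝒯, h𝒯sub, h𝒯3⟩ := Set.exists_subset_card_eq (show 3 ≤ _ from hcount)
    obtain ⟨T1, T2, T3, hne12, hne13, hne23, rfl⟩ := Set.ncard_eq_three.mp h𝒯3
    have m1 := h𝒯sub (show T1 ∈ ({T1, T2, T3} : Set (Set (Fin n))) by simp)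
    have m2 := h𝒯sub (show T2 ∈ ({T1, T2, T3} : Set (Set (Fin n))) by simp)
    have m3 := h𝒯sub (show T3 ∈ ({T1, T2, T3} : Set (Set (Fin n))) by simp)
    obtain ⟨hC1, hc1, h1S⟩ := m1
    obtain ⟨hC2, hc2, h2S⟩ := m2
    obtain ⟨hC3, hc3, h3S⟩ := m3
    rcases build hn hE hrk hsp hS6 hC1 hc1 h1S hC2 hc2 h2S hC3 hc3 h3S hne12 hne13 hne23 with
      h | h
    · exact hW.1 h
    · exact hW.2 h
  · intro hbound
    constructor
    · rintro ⟨N, hmin, a, hainj, haE, hrkN, -, hcirc⟩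
      exact reverse_dir hn hE hrk hsp hbound hmin hainj haE hrkN
        ((hcirc _).mpr (Or.inl rfl)) ((hcirc _).mpr (Or.inr (Or.inl rfl)))
        ((hcirc _).mpr (Or.inr (Or.inr rfl)))
    · rintro ⟨N, hmin, a, hainj, haE, hrkN, -, hcirc⟩
      exact reverse_dir hn hE hrk hsp hbound hmin hainj haE hrkN
        ((hcirc _).mpr (Or.inl rfl)) ((hcirc _).mpr (Or.inr (Or.inl rfl)))
        ((hcirc _).mpr (Or.inr (Or.inr (Or.inl rfl))))

end Main

/-- A rank-3 sparse paving matroid on `Fin n` (`n ≥ 4`) has no `𝒲³`- and no `M(K₄)`-minor iff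
every 6-element subset of the ground set contains at most two of its circuit-hyperplanes
(3-element circuits). -/
theorem rank3_sparse_paving_WFree_iff_RuzsaSzemeredi (n : ℕ) (hn : 4 ≤ n)
    (M : Matroid (Fin n)) (hE : M.E = Set.univ) (hrk : RankEq M 3) (hsp : SparsePaving M) :
    WFree M ↔
      ∀ S : Set (Fin n), S.ncard = 6 →
        {c : Set (Fin n) | Circuit M c ∧ c.ncard = 3 ∧ c ⊆ S}.ncard ≤ 2 := by
  exact rank3_sparse_paving_WFree_iff_RuzsaSzemeredi' hn hE hrk hsp

end Paper
end

section
/- Ruzsa–Szemerédi (6,3)-theorem: rs(n) = o(n²), i.e. rs(n)/n² → 0 as n → ∞, where rs(n) is the maximum number of edges of a Ruzsa–Szemerédi hypergraph on n vertices. -/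
open Filter

namespace Paper

variable {V W : Type*} [DecidableEq V] [DecidableEq W]

/-- `E` is (the edge family of) a linear 3-uniform hypergraph: every edge has 3 vertices and
two distinct edges meet in at most one vertex. -/
def Linear3 (E : Set (Finset V)) : Prop :=
  (∀ e ∈ E, e.card = 3) ∧ ∀ e ∈ E, ∀ f ∈ E, e ≠ f → (e ∩ f).card ≤ 1

/-- A Ruzsa–Szemerédi hypergraph: a linear 3-uniform hypergraph in which every 6 vertices
span at most 2 edges. -/
def IsRS (E : Set (Finset V)) : Prop :=
  Linear3 E ∧ ∀ S : Finset V, S.card = 6 → {e ∈ E | e ⊆ S}.ncard ≤ 2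

/-- `E` contains a linear 3-cycle: edges `{a,b,c}, {c,d,e}, {e,f,a}` on six distinct
vertices. -/
def HasLinear3Cycle (E : Set (Finset V)) : Prop :=
  ∃ a b c d e f : V, ({a, b, c, d, e, f} : Finset V).card = 6 ∧
    ({a, b, c} : Finset V) ∈ E ∧ ({c, d, e} : Finset V) ∈ E ∧ ({e, f, a} : Finset V) ∈ E

/-- `E` contains a subgraph copy of the hypergraph with edge family `G`. -/
def HasCopy (G : Set (Finset W)) (E : Set (Finset V)) : Prop :=
  ∃ φ : W → V, Function.Injective φ ∧ ∀ e ∈ G, e.image φ ∈ E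

/-- `E` contains an induced copy of the hypergraph with edge family `G`. -/
def HasInducedCopy (G : Set (Finset W)) (E : Set (Finset V)) : Prop :=
  ∃ φ : W → V, Function.Injective φ ∧ (∀ e ∈ G, e.image φ ∈ E) ∧
    ∀ f ∈ E, (f : Set V) ⊆ Set.range φ → ∃ e ∈ G, f = e.image φ

/-- The linear 3-cycle `𝒲³` (as a 3-uniform hypergraph on six vertices). -/
def cycleHG : Set (Finset (Fin 6)) := {{0, 1, 2}, {2, 3, 4}, {4, 5, 0}}

/-- The Fano hypergraph `F₇`. -/
def fanoHG : Set (Finset (Fin 7)) :=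
  {{0, 1, 2}, {0, 3, 4}, {0, 5, 6}, {1, 3, 5}, {1, 4, 6}, {2, 3, 6}, {2, 4, 5}}

/-- The 3-fan (sail) `F`. -/
def fanHG : Set (Finset (Fin 7)) := {{0, 1, 2}, {0, 3, 4}, {0, 5, 6}, {2, 4, 6}}

end Paper

namespace Paper

/-- `rs n`: the maximum number of edges of a Ruzsa–Szemerédi hypergraph on `n` vertices. -/
noncomputable def rs (n : ℕ) : ℕ :=
  sSup {k : ℕ | ∃ E : Finset (Finset (Fin n)), IsRS (E : Set (Finset (Fin n))) ∧ E.card = k}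

private def rsGraph {n : ℕ} (E : Finset (Finset (Fin n))) : SimpleGraph (Fin n) where
  Adj u v := u ≠ v ∧ ∃ e ∈ E, u ∈ e ∧ v ∈ e
  symm := by constructor; rintro u v ⟨h, e, he, hu, hv⟩; exact ⟨h.symm, e, he, hv, hu⟩
  loopless := by constructor; rintro u ⟨h, -⟩; exact h rfl

private instance {n : ℕ} (E : Finset (Finset (Fin n))) : DecidableRel (rsGraph E).Adj :=
  fun u v => inferInstanceAs (Decidable (u ≠ v ∧ ∃ e ∈ E, u ∈ e ∧ v ∈ e))

private lemma linear_eq {n : ℕ} {E : Finset (Finset (Fin n))}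
    (hE : Linear3 (E : Set (Finset (Fin n)))) {e f : Finset (Fin n)}
    (he : e ∈ E) (hf : f ∈ E) (h2 : 2 ≤ (e ∩ f).card) : e = f := by
  by_contra hne
  have := hE.2 e he f hf hne
  omega

private lemma eq_triple {n : ℕ} {e : Finset (Fin n)} (he : e.card = 3) {a b c : Fin n}
    (hab : a ≠ b) (hac : a ≠ c) (hbc : b ≠ c) (ha : a ∈ e) (hb : b ∈ e) (hc : c ∈ e) :
    e = {a, b, c} := by
  have hsub : ({a, b, c} : Finset (Fin n)) ⊆ e := by
    intro x hx
    simp only [Finset.mem_insert, Finset.mem_singleton] at hx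
    rcases hx with rfl | rfl | rfl <;> assumption
  have hcard : ({a, b, c} : Finset (Fin n)).card = 3 := by
    rw [Finset.card_insert_of_notMem (by simp [hab, hac]),
      Finset.card_insert_of_notMem (by simp [hbc]), Finset.card_singleton]
  exact (Finset.eq_of_subset_of_card_le hsub (by omega)).symm

private lemma clique_iff {n : ℕ} (hn : 6 ≤ n) {E : Finset (Finset (Fin n))}
    (hE : IsRS (E : Set (Finset (Fin n)))) (t : Finset (Fin n)) :
    t ∈ (rsGraph E).cliqueFinset 3 ↔ t ∈ E := by
  rw [SimpleGraph.mem_cliqueFinset_iff, SimpleGraph.isNClique_iff]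
  constructor
  · rintro ⟨hclique, hcard⟩
    obtain ⟨a, b, c, hab, hac, hbc, rfl⟩ := Finset.card_eq_three.1 hcard
    obtain ⟨-, e1, he1, ha1, hb1⟩ := hclique (by simp) (by simp) hab
    obtain ⟨-, e2, he2, hb2, hc2⟩ := hclique (by simp) (by simp) hbc
    obtain ⟨-, e3, he3, ha3, hc3⟩ := hclique (by simp) (by simp) hac
    suffices h : ∃ e ∈ E, a ∈ e ∧ b ∈ e ∧ c ∈ e by
      obtain ⟨e, he, ha, hb, hc⟩ := h
      rwa [← eq_triple (hE.1.1 e he) hab hac hbc ha hb hc]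
    by_contra hno
    push_neg at hno
    have hc1 : c ∉ e1 := fun h => hno e1 he1 ha1 hb1 h
    have ha2 : a ∉ e2 := fun h => hno e2 he2 h hb2 hc2
    have hb3 : b ∉ e3 := fun h => hno e3 he3 ha3 h hc3
    have hne12 : e1 ≠ e2 := fun h => hc1 (h ▸ hc2)
    have hne13 : e1 ≠ e3 := fun h => hb3 (h ▸ hb1)
    have hne23 : e2 ≠ e3 := fun h => ha2 (h ▸ ha3)
    have hcard1 : e1.card = 3 := hE.1.1 e1 he1
    have hcard2 : e2.card = 3 := hE.1.1 e2 he2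
    have hcard3 : e3.card = 3 := hE.1.1 e3 he3
    have h12 : (e1 ∪ e2).card ≤ 5 := by
      have h := Finset.card_union_add_card_inter e1 e2
      have hbmem : b ∈ e1 ∩ e2 := Finset.mem_inter.2 ⟨hb1, hb2⟩
      have : 1 ≤ (e1 ∩ e2).card := Finset.card_pos.2 ⟨b, hbmem⟩
      omega
    have hU : (e1 ∪ e2 ∪ e3).card ≤ 6 := by
      have h := Finset.card_union_add_card_inter (e1 ∪ e2) e3
      have hsub : ({a, c} : Finset (Fin n)) ⊆ (e1 ∪ e2) ∩ e3 := by
        intro x hx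
        simp only [Finset.mem_insert, Finset.mem_singleton] at hx
        rcases hx with rfl | rfl
        · exact Finset.mem_inter.2 ⟨Finset.mem_union_left _ ha1, ha3⟩
        · exact Finset.mem_inter.2 ⟨Finset.mem_union_right _ hc2, hc3⟩
      have h2 : 2 ≤ ((e1 ∪ e2) ∩ e3).card := by
        calc 2 = ({a, c} : Finset (Fin n)).card := (Finset.card_pair hac).symm
          _ ≤ _ := Finset.card_le_card hsub
      omega
    obtain ⟨S, hUS, -, hS6⟩ :=
      Finset.exists_subsuperset_card_eq (Finset.subset_univ (e1 ∪ e2 ∪ e3)) hU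
        (by simpa using hn)
    have hkey := hE.2 S hS6
    have hsub3 : ({e1, e2, e3} : Set (Finset (Fin n))) ⊆
        {e ∈ (E : Set (Finset (Fin n))) | e ⊆ S} := by
      intro e he'
      simp only [Set.mem_insert_iff, Set.mem_singleton_iff] at he'
      rcases he' with rfl | rfl | rfl
      · exact ⟨he1, fun x hx => hUS (Finset.mem_union_left _ (Finset.mem_union_left _ hx))⟩
      · exact ⟨he2, fun x hx => hUS (Finset.mem_union_left _ (Finset.mem_union_right _ hx))⟩
      · exact ⟨he3, fun x hx => hUS (Finset.mem_union_right _ hx)⟩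
    have hfin : {e ∈ (E : Set (Finset (Fin n))) | e ⊆ S}.Finite :=
      E.finite_toSet.subset fun e he => he.1
    have h3 : ({e1, e2, e3} : Set (Finset (Fin n))).ncard = 3 :=
      Set.ncard_eq_three.2 ⟨e1, e2, e3, hne12, hne13, hne23, rfl⟩
    have := Set.ncard_le_ncard hsub3 hfin
    omega
  · intro ht
    refine ⟨fun u hu v hv huv => ⟨huv, t, ht, hu, hv⟩, hE.1.1 t ht⟩

private lemma pair_inj {n : ℕ} {E : Finset (Finset (Fin n))}
    (hE : Linear3 (E : Set (Finset (Fin n)))) {e f : Finset (Fin n)}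
    (he : e ∈ E) (hf : f ∈ E) {u v u' v' : Fin n} (hu : u ∈ e) (hv : v ∈ e) (huv : u ≠ v)
    (hu' : u' ∈ f) (hv' : v' ∈ f) (h : s(u, v) = s(u', v')) : e = f := by
  apply linear_eq hE he hf
  have huf : u ∈ f ∧ v ∈ f := by
    rw [Sym2.eq_iff] at h
    rcases h with ⟨rfl, rfl⟩ | ⟨rfl, rfl⟩
    · exact ⟨hu', hv'⟩
    · exact ⟨hv', hu'⟩
  calc 2 = ({u, v} : Finset (Fin n)).card := (Finset.card_pair huv).symm
    _ ≤ (e ∩ f).card := Finset.card_le_card (by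
        intro x hx
        simp only [Finset.mem_insert, Finset.mem_singleton] at hx
        rcases hx with rfl | rfl
        · exact Finset.mem_inter.2 ⟨hu, huf.1⟩
        · exact Finset.mem_inter.2 ⟨hv, huf.2⟩)

private lemma rs_deleteFar {n : ℕ} {E : Finset (Finset (Fin n))}
    (hE : IsRS (E : Set (Finset (Fin n)))) :
    (rsGraph E).DeleteFar (fun H => H.CliqueFree 3) (E.card : ℝ) := by
  intro s hs hfree
  have hmap : ∀ e ∈ E, ∃ u ∈ e, ∃ v ∈ e, u ≠ v ∧ s(u, v) ∈ s := by
    intro e he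
    by_contra hcon
    push_neg at hcon
    refine hfree e ⟨?_, hE.1.1 e he⟩
    intro u hu v hv huv
    rw [SimpleGraph.deleteEdges_adj]
    exact ⟨⟨huv, e, he, hu, hv⟩, hcon u hu v hv huv⟩
  choose u hu v hv huv hmem using hmap
  have hineq : E.card ≤ s.card := by
    have := Finset.card_le_card_of_injOn (s := E.attach) (t := s)
      (fun e => s(u e.1 e.2, v e.1 e.2)) (fun e _ => hmem e.1 e.2) ?_
    · simpa using this
    intro e1 _ e2 _ heq
    exact Subtype.ext (pair_inj hE.1 e1.2 e2.2 (hu e1.1 e1.2) (hv e1.1 e1.2)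
      (huv e1.1 e1.2) (hu e2.1 e2.2) (hv e2.1 e2.2) heq)
  exact_mod_cast hineq

private lemma card_le_sq {n : ℕ} {E : Finset (Finset (Fin n))}
    (hE : IsRS (E : Set (Finset (Fin n)))) : E.card ≤ n ^ 2 := by
  have hmap : ∀ e ∈ E, ∃ u ∈ e, ∃ v ∈ e, u ≠ v := by
    intro e he
    have : 1 < e.card := by rw [hE.1.1 e he]; norm_num
    exact Finset.one_lt_card.1 this
  choose u hu v hv huv using hmap
  have h1 : E.card ≤ Fintype.card (Sym2 (Fin n)) := by
    have := Finset.card_le_card_of_injOn (s := E.attach) (t := Finset.univ)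
      (fun e => s(u e.1 e.2, v e.1 e.2)) (fun e _ => Finset.mem_univ _) ?_
    · simpa using this
    intro e1 _ e2 _ heq
    exact Subtype.ext (pair_inj hE.1 e1.2 e2.2 (hu e1.1 e1.2) (hv e1.1 e1.2)
      (huv e1.1 e1.2) (hu e2.1 e2.2) (hv e2.1 e2.2) heq)
  have h2 : Fintype.card (Sym2 (Fin n)) = (n + 1) * n / 2 := by
    rw [Sym2.card, Fintype.card_fin, Nat.choose_two_right]
    simp
  have h3 : (n + 1) * n / 2 ≤ n ^ 2 := by
    have hn2 : n ≤ n ^ 2 := Nat.le_self_pow two_ne_zero n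
    have : (n + 1) * n ≤ n ^ 2 * 2 := by nlinarith
    omega
  omega

private lemma rs_spec (n : ℕ) : ∃ E : Finset (Finset (Fin n)),
    IsRS (E : Set (Finset (Fin n))) ∧ E.card = rs n := by
  have hne : {k : ℕ | ∃ E : Finset (Finset (Fin n)),
      IsRS (E : Set (Finset (Fin n))) ∧ E.card = k}.Nonempty := by
    refine ⟨0, ∅, ⟨⟨?_, ?_⟩, ?_⟩, by simp⟩
    · intro e he; simp at he
    · intro e he; simp at he
    · intro S _
      have : {e ∈ ((∅ : Finset (Finset (Fin n))) : Set (Finset (Fin n))) | e ⊆ S} = ∅ := by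
        simp
      rw [this, Set.ncard_empty]
      omega
  have hbdd : BddAbove {k : ℕ | ∃ E : Finset (Finset (Fin n)),
      IsRS (E : Set (Finset (Fin n))) ∧ E.card = k} := by
    refine ⟨Fintype.card (Finset (Fin n)), ?_⟩
    rintro k ⟨E, -, rfl⟩
    simpa using Finset.card_le_univ E
  exact Nat.sSup_mem hne hbdd


private lemma rs_lt (ε : ℝ) (hε : 0 < ε) (hε1 : ε ≤ 1) :
    ∀ᶠ n : ℕ in atTop, (rs n : ℝ) < ε * (n : ℝ) ^ 2 := by
  obtain ⟨N, hN⟩ := exists_nat_gt (1 / SimpleGraph.triangleRemovalBound ε)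
  filter_upwards [eventually_ge_atTop (max 6 (N + 1))] with n hn
  have hn6 : 6 ≤ n := le_trans (le_max_left _ _) hn
  have hnN : N < n := lt_of_lt_of_le (Nat.lt_succ_self N) (le_trans (le_max_right _ _) hn)
  by_contra hcon
  push_neg at hcon
  obtain ⟨E, hE, hcard⟩ := rs_spec n
  have htrb := SimpleGraph.triangleRemovalBound_pos hε
  have hfar : (rsGraph E).FarFromTriangleFree ε := by
    apply (rs_deleteFar hE).mono
    rw [hcard]
    calc ε * ((Fintype.card (Fin n)) ^ 2 : ℕ) = ε * (n : ℝ) ^ 2 := by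
          rw [Fintype.card_fin]; push_cast; ring
      _ ≤ (rs n : ℝ) := hcon
  have hkey := hfar.le_card_cliqueFinset
  have hclq : (rsGraph E).cliqueFinset 3 = E := Finset.ext (clique_iff hn6 hE)
  rw [hclq, Fintype.card_fin] at hkey
  have hb : (E.card : ℝ) ≤ (n : ℝ) ^ 2 := by exact_mod_cast card_le_sq hE
  have hn0 : (0 : ℝ) < (n : ℝ) := by positivity
  have h1 : SimpleGraph.triangleRemovalBound ε * (n : ℝ) ≤ 1 := by nlinarith [pow_pos hn0 2]
  have h2 : (n : ℝ) ≤ 1 / SimpleGraph.triangleRemovalBound ε := by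
    rw [le_div_iff₀ htrb]; linarith
  have h3 : (N : ℝ) < (n : ℝ) := by exact_mod_cast hnN
  linarith

/-- **Ruzsa–Szemerédi (6,3)-theorem.** `rs(n) = o(n²)`. -/
theorem ruzsa_szemeredi :
    Tendsto (fun n : ℕ => (rs n : ℝ) / (n : ℝ) ^ 2) atTop (nhds 0) := by
  rw [NormedAddCommGroup.tendsto_nhds_zero]
  intro ε hε
  filter_upwards [rs_lt (min ε 1) (lt_min hε one_pos) (min_le_right _ _),
    eventually_ge_atTop 1] with n hn hn1
  have hn0 : (0 : ℝ) < (n : ℝ) := by exact_mod_cast Nat.lt_of_lt_of_le Nat.zero_lt_one hn1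
  have hn2 : (0 : ℝ) < (n : ℝ) ^ 2 := by positivity
  rw [Real.norm_eq_abs, abs_of_nonneg (by positivity), div_lt_iff₀ hn2]
  calc (rs n : ℝ) < min ε 1 * (n : ℝ) ^ 2 := hn
    _ ≤ ε * (n : ℝ) ^ 2 := by
        have := min_le_left ε 1
        nlinarith


end Paper
end

section
/- The number of Ruzsa–Szemerédi hypergraphs on vertex set Fin n is 2^{o(n²)}: if N(n) denotes the number of families E of 3-element subsets of Fin n that form a Ruzsa–Szemerédi hypergraph, then log₂(N(n))/n² → 0 as n → ∞. -/
open Filter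

namespace Paper

open Finset SimpleGraph

variable {n : ℕ}

/-- The shadow graph of a 3-uniform hypergraph. -/
def shadow (E : Set (Finset (Fin n))) : SimpleGraph (Fin n) where
  Adj x y := x ≠ y ∧ ∃ e ∈ E, x ∈ e ∧ y ∈ e
  symm := by
    constructor
    rintro x y ⟨hxy, e, he, hx, hy⟩
    exact ⟨hxy.symm, e, he, hy, hx⟩
  loopless := by constructor; rintro x ⟨h, -⟩; exact h rfl

lemma shadow_adj {E : Set (Finset (Fin n))} {x y : Fin n} :
    (shadow E).Adj x y ↔ x ≠ y ∧ ∃ e ∈ E, x ∈ e ∧ y ∈ e := Iff.rfl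

/-- Each hyperedge of a 3-uniform hypergraph is a triangle of the shadow graph. -/
lemma isNClique_of_mem {E : Set (Finset (Fin n))} (h3 : ∀ e ∈ E, e.card = 3)
    {e : Finset (Fin n)} (he : e ∈ E) : (shadow E).IsNClique 3 e := by
  obtain ⟨x, y, z, hxy, hxz, hyz, rfl⟩ := Finset.card_eq_three.1 (h3 e he)
  rw [is3Clique_triple_iff]
  refine ⟨⟨hxy, _, he, by simp, by simp⟩, ⟨hxz, _, he, by simp, by simp⟩,
    ⟨hyz, _, he, by simp, by simp⟩⟩

/-- Conversely, in an RS hypergraph on at least 6 vertices, every triangle of the shadow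
graph is a hyperedge. -/
lemma cliqueSet_shadow {E : Set (Finset (Fin n))} (hn : 6 ≤ n) (hE : IsRS E) :
    (shadow E).cliqueSet 3 = E := by
  apply Set.Subset.antisymm
  · rintro s hs
    rw [mem_cliqueSet_iff] at hs
    have hcard := hs.2
    obtain ⟨x, y, z, hxy, hxz, hyz, rfl⟩ := is3Clique_iff.1 hs
    obtain ⟨hxy', e₁, he₁, hxe₁, hye₁⟩ := hxy
    obtain ⟨hxz', e₂, he₂, hxe₂, hze₂⟩ := hxz
    obtain ⟨hyz', e₃, he₃, hye₃, hze₃⟩ := hyz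
    -- if two of the edges coincide, that edge contains all of x, y, z and equals {x,y,z}
    have hsub : ∀ e ∈ E, x ∈ e → y ∈ e → z ∈ e → ({x, y, z} : Finset (Fin n)) ∈ E := by
      intro e he hx hy hz
      have hsub : ({x, y, z} : Finset (Fin n)) ⊆ e := by
        intro a ha
        simp only [mem_insert, mem_singleton] at ha
        rcases ha with rfl | rfl | rfl <;> assumption
      have : ({x, y, z} : Finset (Fin n)) = e :=
        Finset.eq_of_subset_of_card_le hsub (by rw [hE.1.1 e he, hcard])
      rwa [this]
    by_cases h12 : e₁ = e₂
    · exact hsub e₁ he₁ hxe₁ hye₁ (h12 ▸ hze₂)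
    by_cases h13 : e₁ = e₃
    · exact hsub e₁ he₁ hxe₁ hye₁ (h13 ▸ hze₃)
    by_cases h23 : e₂ = e₃
    · exact hsub e₂ he₂ hxe₂ (h23 ▸ hye₃) hze₂
    -- all three distinct: they span at most 6 vertices, contradicting the RS property
    exfalso
    have c1 : e₁.card = 3 := hE.1.1 e₁ he₁
    have c2 : e₂.card = 3 := hE.1.1 e₂ he₂
    have c3 : e₃.card = 3 := hE.1.1 e₃ he₃
    have c12 : (e₁ ∪ e₂).card ≤ 5 := by
      have h := Finset.card_union_add_card_inter e₁ e₂
      have : 1 ≤ (e₁ ∩ e₂).card := Finset.card_pos.2 ⟨x, Finset.mem_inter.2 ⟨hxe₁, hxe₂⟩⟩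
      omega
    have c123 : ((e₁ ∪ e₂) ∪ e₃).card ≤ 6 := by
      have h := Finset.card_union_add_card_inter (e₁ ∪ e₂) e₃
      have h2 : ({y, z} : Finset (Fin n)) ⊆ (e₁ ∪ e₂) ∩ e₃ := by
        intro a ha
        simp only [mem_insert, mem_singleton] at ha
        rcases ha with rfl | rfl
        · exact Finset.mem_inter.2 ⟨Finset.mem_union_left _ hye₁, hye₃⟩
        · exact Finset.mem_inter.2 ⟨Finset.mem_union_right _ hze₂, hze₃⟩
      have h3 : 2 ≤ ((e₁ ∪ e₂) ∩ e₃).card := by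
        calc 2 = ({y, z} : Finset (Fin n)).card := (Finset.card_pair hyz').symm
        _ ≤ _ := Finset.card_le_card h2
      omega
    obtain ⟨S, hS, hS6⟩ := Finset.exists_superset_card_eq c123 (by simpa using hn)
    have hsub : ({e₁, e₂, e₃} : Set (Finset (Fin n))) ⊆ {e ∈ E | e ⊆ S} := by
      rintro f (rfl | rfl | rfl)
      · exact ⟨he₁, fun a ha => hS (Finset.mem_union_left _ (Finset.mem_union_left _ ha))⟩
      · exact ⟨he₂, fun a ha => hS (Finset.mem_union_left _ (Finset.mem_union_right _ ha))⟩
      · exact ⟨he₃, fun a ha => hS (Finset.mem_union_right _ ha)⟩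
    have h3' : 3 ≤ {e ∈ E | e ⊆ S}.ncard := by
      have hle := Set.ncard_le_ncard hsub (Set.toFinite _)
      rwa [Set.ncard_eq_three.2 ⟨e₁, e₂, e₃, h12, h13, h23, rfl⟩] at hle
    have := hE.2 S hS6
    omega
  · intro e he
    exact mem_cliqueSet_iff.2 (isNClique_of_mem hE.1.1 he)

/-- The shadow graph of an RS hypergraph is locally linear. -/
lemma locallyLinear_shadow {E : Set (Finset (Fin n))} (hn : 6 ≤ n) (hE : IsRS E) :
    (shadow E).LocallyLinear := by
  constructor
  · rw [EdgeDisjointTriangles, cliqueSet_shadow hn hE]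
    intro e he f hf hef
    intro a ha b hb
    have h1 := hE.1.2 e he f hf hef
    rw [Finset.card_le_one] at h1
    have ha' : a ∈ e ∩ f := Finset.mem_inter.2 ⟨ha.1, ha.2⟩
    have hb' : b ∈ e ∩ f := Finset.mem_inter.2 ⟨hb.1, hb.2⟩
    exact h1 a ha' b hb'
  · rintro x y ⟨hxy, e, he, hx, hy⟩
    exact ⟨e, isNClique_of_mem hE.1.1 he, hx, hy⟩


/-- The Ruzsa–Szemerédi theorem (via the triangle removal lemma): an RS hypergraph on `n`
vertices has at most `ε n ^ 2` edges, for `n` large. -/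
lemma rs_ncard_le {ε : ℝ} (hε : 0 < ε) (hε1 : ε ≤ 1) :
    ∃ N : ℕ, ∀ n : ℕ, N ≤ n → ∀ E : Set (Finset (Fin n)), IsRS E →
      (E.ncard : ℝ) ≤ ε * (n : ℝ) ^ 2 := by
  classical
  refine ⟨max 6 (⌈(triangleRemovalBound ε)⁻¹⌉₊ + 1), fun n hn E hE => ?_⟩
  have hn6 : 6 ≤ n := le_trans (le_max_left _ _) hn
  set G := shadow E with hG
  haveI : DecidableRel G.Adj := Classical.decRel _
  have hLL : G.LocallyLinear := locallyLinear_shadow hn6 hE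
  have hcoe : (G.cliqueFinset 3 : Set (Finset (Fin n))) = E := by
    rw [coe_cliqueFinset, hG, cliqueSet_shadow hn6 hE]
  have hcard : E.ncard = #(G.cliqueFinset 3) := by
    rw [← hcoe, Set.ncard_coe_finset]
  -- crude bound: the number of triangles is at most n ^ 2
  have hTn : #(G.cliqueFinset 3) ≤ n ^ 2 := by
    have h1 : #G.edgeFinset = 3 * #(G.cliqueFinset 3) := hLL.card_edgeFinset
    have h2 : #G.edgeFinset ≤ Fintype.card (Sym2 (Fin n)) := Finset.card_le_univ _
    have h3 : Fintype.card (Sym2 (Fin n)) = (n + 1).choose 2 := by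
      rw [Sym2.card, Fintype.card_fin]
    have h4 : (n + 1).choose 2 ≤ n ^ 2 := by
      rw [Nat.choose_two_right]
      simp only [Nat.add_sub_cancel]
      calc (n + 1) * n / 2 ≤ 2 * n * n / 2 := by
            apply Nat.div_le_div_right
            apply Nat.mul_le_mul_right
            omega
        _ = n * n := by rw [mul_assoc, Nat.mul_div_cancel_left _ (by norm_num)]
        _ = n ^ 2 := (sq n).symm
    omega
  by_contra hcon
  push_neg at hcon
  have hfar : G.FarFromTriangleFree ε := by
    apply hLL.edgeDisjointTriangles.farFromTriangleFree
    rw [Fintype.card_fin]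
    push_cast
    rw [hcard] at hcon
    linarith
  have h1 := hfar.le_card_cliqueFinset
  rw [Fintype.card_fin] at h1
  have hc : 0 < triangleRemovalBound ε := triangleRemovalBound_pos hε
  have hn' : (⌈(triangleRemovalBound ε)⁻¹⌉₊ + 1 : ℕ) ≤ n := le_trans (le_max_right _ _) hn
  have hinv : (triangleRemovalBound ε)⁻¹ < (n : ℝ) := by
    calc (triangleRemovalBound ε)⁻¹ ≤ (⌈(triangleRemovalBound ε)⁻¹⌉₊ : ℝ) := Nat.le_ceil _
      _ < ((⌈(triangleRemovalBound ε)⁻¹⌉₊ + 1 : ℕ) : ℝ) := by push_cast; linarith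
      _ ≤ (n : ℝ) := by exact_mod_cast hn'
  have hone : 1 < triangleRemovalBound ε * n := by
    rw [inv_lt_iff_one_lt_mul₀ hc] at hinv
    linarith [hinv]
  have hn0 : (0 : ℝ) < n := by positivity
  have hT2 : (#(G.cliqueFinset 3) : ℝ) ≤ (n : ℝ) ^ 2 := by exact_mod_cast hTn
  have h2 : (1 : ℝ) * (n : ℝ) ^ 2 < (triangleRemovalBound ε * n) * (n : ℝ) ^ 2 :=
    mul_lt_mul_of_pos_right hone (by positivity)
  have h3 : (triangleRemovalBound ε * n) * (n : ℝ) ^ 2 = triangleRemovalBound ε * (n : ℝ) ^ 3 := by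
    ring
  linarith


lemma card_sym2_le (n : ℕ) : Fintype.card (Sym2 (Fin n)) ≤ n ^ 2 := by
  rw [Sym2.card, Fintype.card_fin, Nat.choose_two_right]
  simp only [Nat.add_sub_cancel]
  calc (n + 1) * n / 2 ≤ 2 * n * n / 2 := by
        apply Nat.div_le_div_right
        cases n with
        | zero => simp
        | succ m => nlinarith
    _ = n * n := by rw [mul_assoc, Nat.mul_div_cancel_left _ (by norm_num)]
    _ = n ^ 2 := (sq n).symm

/-- Chernoff-type bound for partial sums of binomial coefficients. -/
lemma sum_choose_le (P K : ℕ) {x : ℝ} (hx : 0 < x) (hx1 : x ≤ 1) :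
    (∑ k ∈ Finset.range (K + 1), (P.choose k : ℝ)) ≤ (1 + x) ^ P * x⁻¹ ^ K := by
  have key : x ^ K * ∑ k ∈ Finset.range (K + 1), (P.choose k : ℝ) ≤ (1 + x) ^ P := by
    rw [Finset.mul_sum]
    calc ∑ k ∈ Finset.range (K + 1), x ^ K * (P.choose k : ℝ)
        ≤ ∑ k ∈ Finset.range (K + 1), x ^ k * (P.choose k : ℝ) := by
          apply Finset.sum_le_sum
          intro k hk
          have hk' : k ≤ K := by simp only [Finset.mem_range] at hk; omega
          exact mul_le_mul_of_nonneg_right (pow_le_pow_of_le_one hx.le hx1 hk')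
            (by positivity)
      _ ≤ ∑ k ∈ Finset.range (P + K + 1), x ^ k * (P.choose k : ℝ) := by
          apply Finset.sum_le_sum_of_subset_of_nonneg
          · exact Finset.range_subset_range.2 (by omega)
          · intro i _ _; positivity
      _ = ∑ k ∈ Finset.range (P + 1), x ^ k * (P.choose k : ℝ) := by
          refine (Finset.sum_subset (Finset.range_subset_range.2 (by omega)) ?_).symm
          intro k hk hk'
          have hPk : P < k := by
            simp only [Finset.mem_range] at hk hk'; omega
          simp [Nat.choose_eq_zero_of_lt hPk]
      _ = (x + 1) ^ P := by
          rw [add_pow]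
          exact Finset.sum_congr rfl fun k _ => by rw [one_pow, mul_one]
      _ = (1 + x) ^ P := by ring
  have hx0 : x ≠ 0 := hx.ne'
  calc (∑ k ∈ Finset.range (K + 1), (P.choose k : ℝ))
      = x⁻¹ ^ K * (x ^ K * ∑ k ∈ Finset.range (K + 1), (P.choose k : ℝ)) := by
        rw [← mul_assoc, ← mul_pow, inv_mul_cancel₀ hx0, one_pow, one_mul]
    _ ≤ x⁻¹ ^ K * (1 + x) ^ P := by
        apply mul_le_mul_of_nonneg_left key (by positivity)
    _ = (1 + x) ^ P * x⁻¹ ^ K := by ring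

/-- Counting: the number of RS hypergraphs on `Fin n` is at most
`(1+ε)^(n^2) * (1/ε)^(3 ε n^2)` for `n` large. -/
lemma count_le {ε : ℝ} (hε : 0 < ε) (hε1 : ε ≤ 1) :
    ∃ N : ℕ, ∀ n : ℕ, N ≤ n →
      ({E : Set (Finset (Fin n)) | IsRS E}.ncard : ℝ)
        ≤ (1 + ε) ^ (n ^ 2) * ε⁻¹ ^ ⌊3 * ε * (n : ℝ) ^ 2⌋₊ := by
  classical
  obtain ⟨N, hN⟩ := rs_ncard_le hε hε1
  refine ⟨max N 6, fun n hn => ?_⟩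
  have hn6 : 6 ≤ n := le_trans (le_max_right _ _) hn
  have hnN : N ≤ n := le_trans (le_max_left _ _) hn
  set K := ⌊3 * ε * (n : ℝ) ^ 2⌋₊ with hK
  set RS := {E : Set (Finset (Fin n)) | IsRS E} with hRS
  set enc : Set (Finset (Fin n)) → Finset (Sym2 (Fin n)) :=
    fun E => (Set.toFinite (shadow E).edgeSet).toFinset with henc
  have hinj : Set.InjOn enc RS := by
    intro E hE F hF h
    have h1 : (shadow E).edgeSet = (shadow F).edgeSet := by
      rwa [Set.Finite.toFinset_inj] at h
    have h2 : shadow E = shadow F := edgeSet_inj.1 h1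
    rw [← cliqueSet_shadow hn6 hE, h2, cliqueSet_shadow hn6 hF]
  set C : Finset (Finset (Sym2 (Fin n))) :=
    Finset.univ.filter fun s : Finset (Sym2 (Fin n)) => #s ≤ K with hC
  have himg : enc '' RS ⊆ (C : Set (Finset (Sym2 (Fin n)))) := by
    rintro - ⟨E, hE, rfl⟩
    simp only [hC, Finset.coe_filter, Set.mem_setOf_eq, Finset.mem_univ, true_and]
    haveI : DecidableRel (shadow E).Adj := Classical.decRel _
    have hc : #(enc E) = (shadow E).edgeSet.ncard :=
      (Set.ncard_eq_toFinset_card _ _).symm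
    have hc2 : (shadow E).edgeSet.ncard = #(shadow E).edgeFinset := by
      rw [← coe_edgeFinset, Set.ncard_coe_finset]
    have hee : #(shadow E).edgeFinset = 3 * #((shadow E).cliqueFinset 3) :=
      (locallyLinear_shadow hn6 hE).card_edgeFinset
    have hEc : E.ncard = #((shadow E).cliqueFinset 3) := by
      rw [← Set.ncard_coe_finset, coe_cliqueFinset, cliqueSet_shadow hn6 hE]
    have hcardE : (E.ncard : ℝ) ≤ ε * (n : ℝ) ^ 2 := hN n hnN E hE
    apply Nat.le_floor
    rw [hc, hc2, hee, ← hEc]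
    push_cast
    linarith
  have h1 : RS.ncard = (enc '' RS).ncard := (Set.ncard_image_of_injOn hinj).symm
  have h2 : (enc '' RS).ncard ≤ #C := by
    rw [← Set.ncard_coe_finset C]
    exact Set.ncard_le_ncard himg (Set.toFinite _)
  have h3 : C ⊆ (Finset.range (K + 1)).biUnion
      (fun k => Finset.powersetCard k (Finset.univ : Finset (Sym2 (Fin n)))) := by
    intro s hs
    simp only [hC, Finset.mem_filter] at hs
    exact Finset.mem_biUnion.2 ⟨#s, Finset.mem_range.2 (by omega),
      Finset.mem_powersetCard.2 ⟨Finset.subset_univ _, rfl⟩⟩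
  have h4 : #C ≤ ∑ k ∈ Finset.range (K + 1), (Fintype.card (Sym2 (Fin n))).choose k := by
    refine le_trans (Finset.card_le_card h3) (le_trans Finset.card_biUnion_le (le_of_eq ?_))
    refine Finset.sum_congr rfl fun k _ => ?_
    rw [Finset.card_powersetCard, Finset.card_univ]
  have hsum := sum_choose_le (Fintype.card (Sym2 (Fin n))) K hε hε1
  have hP : Fintype.card (Sym2 (Fin n)) ≤ n ^ 2 := card_sym2_le n
  calc (RS.ncard : ℝ) ≤ (∑ k ∈ Finset.range (K + 1),
        (Fintype.card (Sym2 (Fin n))).choose k : ℕ) := by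
        exact_mod_cast le_trans (le_of_eq h1) (le_trans h2 h4)
    _ = ∑ k ∈ Finset.range (K + 1), ((Fintype.card (Sym2 (Fin n))).choose k : ℝ) := by
        push_cast; rfl
    _ ≤ (1 + ε) ^ (Fintype.card (Sym2 (Fin n))) * ε⁻¹ ^ K := hsum
    _ ≤ (1 + ε) ^ (n ^ 2) * ε⁻¹ ^ K := by
        apply mul_le_mul_of_nonneg_right _ (by positivity)
        exact pow_le_pow_right₀ (by linarith) hP


lemma isRS_empty : IsRS (∅ : Set (Finset (Fin n))) := by
  refine ⟨⟨by simp, by simp⟩, fun S hS => ?_⟩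
  have h : {e ∈ (∅ : Set (Finset (Fin n))) | e ⊆ S} = ∅ := by
    ext e; simp
  simp [h]

/-- The number of Ruzsa–Szemerédi hypergraphs on vertex set `Fin n` is `2^{o(n²)}`. -/
theorem count_ruzsa_szemeredi_hypergraphs :
    Tendsto
      (fun n : ℕ =>
        Real.logb 2 (Set.ncard {E : Set (Finset (Fin n)) | IsRS E}) / (n : ℝ) ^ 2)
      atTop (nhds 0) := by
  rw [Metric.tendsto_atTop]
  intro η hη
  set s : ℝ := min 1 (η / 28) with hs
  have hs0 : 0 < s := lt_min one_pos (by positivity)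
  have hs1 : s ≤ 1 := min_le_left _ _
  have hsη : s ≤ η / 28 := min_le_right _ _
  set ε : ℝ := s ^ 2 with hε
  have hε0 : 0 < ε := by positivity
  have hε1 : ε ≤ 1 := by nlinarith
  obtain ⟨N, hN⟩ := count_le hε0 hε1
  refine ⟨max N 1, fun n hn => ?_⟩
  have hn1 : 1 ≤ n := le_trans (le_max_right _ _) hn
  have hnN : N ≤ n := le_trans (le_max_left _ _) hn
  have hn2 : (0 : ℝ) < (n : ℝ) ^ 2 := by
    have : (0 : ℝ) < (n : ℝ) := by exact_mod_cast hn1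
    positivity
  simp only [Real.dist_eq, sub_zero]
  set Nc := {E : Set (Finset (Fin n)) | IsRS E}.ncard with hNcdef
  have hNc1 : 1 ≤ Nc := by
    rw [hNcdef, Nat.one_le_iff_ne_zero, ← Nat.pos_iff_ne_zero]
    exact (Set.ncard_pos (Set.toFinite _)).2 ⟨∅, isRS_empty⟩
  have hNc0 : (0 : ℝ) < (Nc : ℝ) := by exact_mod_cast hNc1
  set K := ⌊3 * ε * (n : ℝ) ^ 2⌋₊ with hK
  have hub : (Nc : ℝ) ≤ (1 + ε) ^ (n ^ 2) * ε⁻¹ ^ K := hN n hnN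
  have hεinv1 : (1 : ℝ) ≤ ε⁻¹ := by
    have hmul : ε * ε⁻¹ = 1 := mul_inv_cancel₀ hε0.ne'
    nlinarith [hmul, hε0, hε1]
  have hlogNc : Real.log Nc ≤ 7 * s * (n : ℝ) ^ 2 := by
    have h1 : Real.log Nc ≤ Real.log ((1 + ε) ^ (n ^ 2) * ε⁻¹ ^ K) :=
      Real.log_le_log hNc0 hub
    have h2 : Real.log ((1 + ε) ^ (n ^ 2) * ε⁻¹ ^ K)
        = ((n ^ 2 : ℕ) : ℝ) * Real.log (1 + ε) + (K : ℝ) * Real.log ε⁻¹ := by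
      rw [Real.log_mul (by positivity) (by positivity), Real.log_pow, Real.log_pow]
    have h3 : Real.log (1 + ε) ≤ ε := by
      have := Real.log_le_sub_one_of_pos (show (0 : ℝ) < 1 + ε by linarith)
      linarith
    have h4 : Real.log ε⁻¹ ≤ 2 * s⁻¹ := by
      have hεinv : ε⁻¹ = s⁻¹ ^ 2 := by rw [hε, ← inv_pow]
      rw [hεinv, Real.log_pow]
      have := Real.log_le_sub_one_of_pos (show (0 : ℝ) < s⁻¹ by positivity)
      push_cast
      nlinarith [this]
    have h5 : (K : ℝ) ≤ 3 * ε * (n : ℝ) ^ 2 := Nat.floor_le (by positivity)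
    have h6 : 0 ≤ Real.log ε⁻¹ := Real.log_nonneg hεinv1
    have h7 : ((n ^ 2 : ℕ) : ℝ) = (n : ℝ) ^ 2 := by push_cast; rfl
    have h8 : (K : ℝ) * Real.log ε⁻¹ ≤ (3 * ε * (n : ℝ) ^ 2) * (2 * s⁻¹) :=
      mul_le_mul h5 h4 h6 (by positivity)
    have h9 : (3 * ε * (n : ℝ) ^ 2) * (2 * s⁻¹) = 6 * s * (n : ℝ) ^ 2 := by
      rw [hε]
      field_simp
      ring
    have h10 : ((n ^ 2 : ℕ) : ℝ) * Real.log (1 + ε) ≤ (n : ℝ) ^ 2 * ε := by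
      rw [h7]
      exact mul_le_mul_of_nonneg_left h3 hn2.le
    have hsum : Real.log Nc ≤ (n : ℝ) ^ 2 * ε + 6 * s * (n : ℝ) ^ 2 := by
      rw [h2] at h1
      linarith
    rw [hε] at hsum
    nlinarith [hsum, hn2, hs0, hs1]
  have hfn : Real.logb 2 Nc / (n : ℝ) ^ 2 ≤ 14 * s := by
    rw [← Real.log_div_log]
    have hlog2 : (1 / 2 : ℝ) < Real.log 2 := by
      have := Real.log_two_gt_d9
      linarith
    rw [div_div, div_le_iff₀ (by positivity)]
    calc Real.log Nc ≤ 7 * s * (n : ℝ) ^ 2 := hlogNc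
      _ ≤ 14 * s * (Real.log 2 * (n : ℝ) ^ 2) := by nlinarith [mul_pos hs0 hn2, hlog2]
  have hfn0 : 0 ≤ Real.logb 2 Nc / (n : ℝ) ^ 2 :=
    div_nonneg (Real.logb_nonneg one_lt_two (by exact_mod_cast hNc1)) hn2.le
  rw [abs_of_nonneg hfn0]
  calc Real.logb 2 Nc / (n : ℝ) ^ 2 ≤ 14 * s := hfn
    _ ≤ 14 * (η / 28) := by linarith
    _ < η := by linarith


end Paper
end
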